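/- arXiv:2411.02881 — 7 statements merged into one kernel-verified Lean document; each statement's English description precedes it below -/
import Mathlib

section
/- Let d, J ∈ ℕ with J ≥ 1, U_1, …, U_J unitary d×d matrices, β_j > 0 with s = Σ_j β_j ≥ 1, and suppose V := Σ_{j=1}^{J} β_j U_j is unitary. Let G be any unitary on ℂ^J with G e_0 = (1/√s) Σ_j √β_j e_j, let select(U) = Σ_j E_{j,j} ⊗ U_j, and W = (G† ⊗ I_d) · select(U) · (G ⊗ I_d). Then for every unit vector ψ ∈ ℂ^d there is a vector φ ∈ ℂ^J ⊗ ℂ^d with W(e_0 ⊗ ψ) = (1/s)(e_0 ⊗ Vψ) + φ, such that (E_{0,0} ⊗ I_d) φ = 0 and ‖φ‖ = √(s² − 1)/s. -/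
open Matrix Kronecker

/-- The Kronecker (tensor) product of two vectors. -/
def vecKron {m d : Type*} (v : m → ℂ) (w : d → ℂ) : m × d → ℂ :=
  fun p => v p.1 * w p.2

lemma kron_conjTranspose {m n d e : Type*} (A : Matrix m n ℂ) (B : Matrix d e ℂ) :
    (A ⊗ₖ B)ᴴ = Aᴴ ⊗ₖ Bᴴ := by
  ext ⟨i,b⟩ ⟨j,c⟩
  simp [conjTranspose_apply]

lemma kron_mulVec {m n d e : Type*} [Fintype n] [Fintype e]
    (A : Matrix m n ℂ) (B : Matrix d e ℂ) (u : n → ℂ) (w : e → ℂ) :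
    (A ⊗ₖ B) *ᵥ vecKron u w = vecKron (A *ᵥ u) (B *ᵥ w) := by
  ext ⟨i,b⟩
  simp [mulVec, dotProduct, vecKron, Fintype.sum_prod_type, Finset.mul_sum,
    Finset.sum_mul, mul_mul_mul_comm]
  rw [Finset.sum_comm]

lemma normsq_cast {n : Type*} [Fintype n] (v : n → ℂ) :
    ((∑ p, ‖v p‖ ^ 2 : ℝ) : ℂ) = star v ⬝ᵥ v := by
  push_cast
  simp [dotProduct, ← Complex.ofReal_pow, Complex.sq_norm, Complex.normSq_eq_conj_mul_self]

lemma unitary_norm {n : Type*} [Fintype n] [DecidableEq n]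
    (M : Matrix n n ℂ) (hM : Mᴴ * M = 1) (v : n → ℂ) :
    ∑ p, ‖(M *ᵥ v) p‖ ^ 2 = ∑ p, ‖v p‖ ^ 2 := by
  have h : ((∑ p, ‖(M *ᵥ v) p‖ ^ 2 : ℝ) : ℂ) = ((∑ p, ‖v p‖ ^ 2 : ℝ) : ℂ) := by
    rw [normsq_cast, normsq_cast, star_mulVec, dotProduct_mulVec, vecMul_vecMul, hM, vecMul_one]
  exact_mod_cast h



lemma sum_stdBasis {J : ℕ} : (∑ j : Fin J, Matrix.single j j (1:ℂ)) = 1 := by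
  ext i k
  rw [Matrix.sum_apply]
  have : ∀ j : Fin J, (Matrix.single j j (1:ℂ)) i k =
      if j = i then (if i = k then (1:ℂ) else 0) else 0 := by
    intro j
    simp only [Matrix.single, Matrix.of_apply]
    by_cases h1 : j = i <;> by_cases h2 : i = k <;> aesop
  simp only [this, Finset.sum_ite_eq', Finset.mem_univ, if_true, Matrix.one_apply]

lemma stdBasis_conjT {J : ℕ} (j : Fin J) :
    (Matrix.single j j (1:ℂ))ᴴ = Matrix.single j j 1 := by
  ext a b
  simp only [Matrix.conjTranspose_apply, Matrix.single, Matrix.of_apply]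
  by_cases h1 : j = a <;> by_cases h2 : j = b <;> simp [h1, h2] <;> aesop

lemma select_unitary {d J : ℕ} (U : Fin J → Matrix (Fin d) (Fin d) ℂ)
    (hU : ∀ j, U j ∈ Matrix.unitaryGroup (Fin d) ℂ) :
    (∑ j : Fin J, Matrix.single j j (1:ℂ) ⊗ₖ U j)ᴴ *
      (∑ j : Fin J, Matrix.single j j (1:ℂ) ⊗ₖ U j) = 1 := by
  rw [conjTranspose_sum, Finset.sum_mul_sum]
  have hone : ∀ j : Fin J, (U j)ᴴ * U j = 1 := fun j => Matrix.mem_unitaryGroup_iff'.mp (hU j)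
  have key : ∀ j k : Fin J, (Matrix.single j j (1:ℂ) ⊗ₖ U j)ᴴ *
      (Matrix.single k k (1:ℂ) ⊗ₖ U k) =
      if j = k then Matrix.single j j (1:ℂ) ⊗ₖ (1 : Matrix (Fin d) (Fin d) ℂ) else 0 := by
    intro j k
    rw [kron_conjTranspose, ← mul_kronecker_mul]
    by_cases h : j = k
    · subst h
      rw [stdBasis_conjT, hone j, Matrix.single_mul_single_same, mul_one, if_pos rfl]
    · rw [stdBasis_conjT, Matrix.single_mul_single_of_ne (h := h)]
      simp [h]
  simp only [key, Finset.sum_ite_eq, Finset.mem_univ, if_true]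
  ext ⟨i,b⟩ ⟨k,c⟩
  rw [Matrix.sum_apply]
  simp only [Matrix.kroneckerMap_apply]
  rw [← Finset.sum_mul, ← Matrix.sum_apply (i := i) (j := k)]
  rw [sum_stdBasis]
  by_cases h : i = k <;> by_cases h2 : b = c <;>
    simp [Matrix.one_apply, h, h2, Prod.ext_iff]

lemma sum_mulVec {n m ι : Type*} [Fintype n] (t : Finset ι)
    (M : ι → Matrix m n ℂ) (v : n → ℂ) :
    (∑ i ∈ t, M i) *ᵥ v = ∑ i ∈ t, M i *ᵥ v := by
  ext a
  simp [mulVec, dotProduct, Matrix.sum_apply, Finset.sum_mul, Finset.sum_apply]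
  rw [Finset.sum_comm]

lemma stdBasis_mulVec {J : ℕ} (j : Fin J) (c : Fin J → ℂ) :
    Matrix.single j j (1:ℂ) *ᵥ c = Pi.single j (c j) := by
  ext k
  simp only [mulVec, dotProduct, Matrix.single, Matrix.of_apply, Pi.single_apply]
  have : ∀ x : Fin J, (if j = k ∧ j = x then (1:ℂ) else 0) * c x =
      if x = j then (if k = j then c j else 0) else 0 := by
    intro x; by_cases h1 : x = j <;> by_cases h2 : k = j <;> aesop
  simp only [this, Finset.sum_ite_eq', Finset.mem_univ, if_true]

/-- Action of the LCU circuit `W = (G† ⊗ I_d) · select(U) · (G ⊗ I_d)` on `e₀ ⊗ ψ`: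
`W(e₀ ⊗ ψ) = (1/s)(e₀ ⊗ Vψ) + φ` with `(E_{0,0} ⊗ I_d) φ = 0` and `‖φ‖ = √(s²−1)/s`. -/
theorem lcu_action (d J : ℕ) (hJ : 0 < J)
    (U : Fin J → Matrix (Fin d) (Fin d) ℂ)
    (hU : ∀ j, U j ∈ Matrix.unitaryGroup (Fin d) ℂ)
    (β : Fin J → ℝ) (hβ : ∀ j, 0 < β j) (s : ℝ) (hs : s = ∑ j, β j) (hs1 : 1 ≤ s)
    (hV : (∑ j : Fin J, (β j : ℂ) • U j) ∈ Matrix.unitaryGroup (Fin d) ℂ)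
    (G : Matrix (Fin J) (Fin J) ℂ) (hG : G ∈ Matrix.unitaryGroup (Fin J) ℂ)
    (hGe : G *ᵥ (Pi.single (⟨0, hJ⟩ : Fin J) 1) =
      fun j => ((Real.sqrt (β j) / Real.sqrt s : ℝ) : ℂ))
    (W : Matrix (Fin J × Fin d) (Fin J × Fin d) ℂ)
    (hW : W = (Gᴴ ⊗ₖ (1 : Matrix (Fin d) (Fin d) ℂ)) *
        (∑ j : Fin J, Matrix.single j j (1 : ℂ) ⊗ₖ U j) *
        (G ⊗ₖ (1 : Matrix (Fin d) (Fin d) ℂ)))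
    (ψ : Fin d → ℂ) (hψ : ∑ b, ‖ψ b‖ ^ 2 = 1) :
    ∃ φ : Fin J × Fin d → ℂ,
      W *ᵥ vecKron (Pi.single (⟨0, hJ⟩ : Fin J) 1) ψ =
          ((s : ℂ))⁻¹ • vecKron (Pi.single (⟨0, hJ⟩ : Fin J) 1)
            ((∑ j : Fin J, (β j : ℂ) • U j) *ᵥ ψ) + φ ∧
        ((Matrix.single (⟨0, hJ⟩ : Fin J) (⟨0, hJ⟩ : Fin J) (1 : ℂ)) ⊗ₖ
            (1 : Matrix (Fin d) (Fin d) ℂ)) *ᵥ φ = 0 ∧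
        Real.sqrt (∑ p, ‖φ p‖ ^ 2) = Real.sqrt (s ^ 2 - 1) / s := by
  have hs0 : (0:ℝ) < s := lt_of_lt_of_le one_pos hs1
  set j0 : Fin J := ⟨0, hJ⟩ with hj0
  set e0 : Fin J → ℂ := Pi.single j0 (1:ℂ) with he0
  set V : Matrix (Fin d) (Fin d) ℂ := ∑ j : Fin J, (β j : ℂ) • U j with hVdef
  set c : Fin J → ℂ := fun j => ((Real.sqrt (β j) / Real.sqrt s : ℝ) : ℂ) with hc
  set x : Fin J × Fin d → ℂ := W *ᵥ vecKron e0 ψ with hx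
  set a : Fin J × Fin d → ℂ := ((s:ℂ))⁻¹ • vecKron e0 (V *ᵥ ψ) with ha
  -- the value of G at column j0
  have hGk : ∀ k, G k j0 = c k := by
    intro k
    have h := congrFun hGe k
    rw [he0] at h
    simpa [Matrix.mulVec_single] using h
  -- c j * c j = β j / s
  have hcc : ∀ j, c j * c j = ((β j / s : ℝ) : ℂ) := by
    intro j
    rw [hc, ← Complex.ofReal_mul]
    congr 1
    rw [div_mul_div_comm, Real.mul_self_sqrt (hβ j).le, Real.mul_self_sqrt hs0.le]
  -- the vector after applying W, explicitly
  have hx2 : (∑ j : Fin J, Matrix.single j j (1 : ℂ) ⊗ₖ U j) *ᵥ vecKron c ψ =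
      fun p => c p.1 * (U p.1 *ᵥ ψ) p.2 := by
    rw [_root_.sum_mulVec]
    ext ⟨k, b⟩
    simp only [Finset.sum_apply, kron_mulVec, stdBasis_mulVec, vecKron, Pi.single_apply,
      ite_mul, zero_mul]
    simp
  have hxval : x = (Gᴴ ⊗ₖ (1 : Matrix (Fin d) (Fin d) ℂ)) *ᵥ
      (fun p => c p.1 * (U p.1 *ᵥ ψ) p.2) := by
    rw [hx, hW, ← Matrix.mulVec_mulVec, ← Matrix.mulVec_mulVec, kron_mulVec, hGe,
      Matrix.one_mulVec, hx2]
  -- component at (j0, b)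
  have hxj0 : ∀ b, x (j0, b) = ((s:ℂ))⁻¹ * (V *ᵥ ψ) b := by
    intro b
    rw [hxval]
    have hcomp : ((Gᴴ ⊗ₖ (1 : Matrix (Fin d) (Fin d) ℂ)) *ᵥ
        fun p => c p.1 * (U p.1 *ᵥ ψ) p.2) (j0, b) =
        ∑ k, (starRingEnd ℂ) (G k j0) * (c k * (U k *ᵥ ψ) b) := by
      simp only [mulVec, dotProduct, Fintype.sum_prod_type, Matrix.kroneckerMap_apply,
        Matrix.conjTranspose_apply, Matrix.one_apply]
      refine Finset.sum_congr rfl fun k _ => ?_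
      simp only [mul_ite, mul_one, mul_zero, ite_mul, zero_mul]
      simp [mulVec, dotProduct]
    rw [hcomp]
    have hVb : (V *ᵥ ψ) b = ∑ k : Fin J, (β k : ℂ) * (U k *ᵥ ψ) b := by
      rw [hVdef, _root_.sum_mulVec]
      simp [Matrix.smul_mulVec]
    rw [hVb, Finset.mul_sum]
    refine Finset.sum_congr rfl fun k _ => ?_
    rw [hGk k]
    have h1 : (starRingEnd ℂ) (c k) = c k := Complex.conj_ofReal _
    rw [h1, ← mul_assoc, hcc k, ← mul_assoc]
    congr 1
    have hsne : (s:ℂ) ≠ 0 := by exact_mod_cast ne_of_gt hs0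
    push_cast
    field_simp
  -- φ has zero block at j0
  have hphi0 : ∀ b, (x - a) (j0, b) = 0 := by
    intro b
    simp only [Pi.sub_apply, hxj0 b, ha, Pi.smul_apply, smul_eq_mul, vecKron, he0,
      Pi.single_eq_same, one_mul, sub_self]
  refine ⟨x - a, by abel, ?_, ?_⟩
  · -- projection vanishes
    ext ⟨j, b⟩
    simp only [mulVec, dotProduct, Fintype.sum_prod_type, Matrix.kroneckerMap_apply,
      Matrix.single, Matrix.of_apply, Matrix.one_apply, ite_mul, zero_mul, one_mul,
      mul_ite, mul_zero, mul_one, Pi.zero_apply]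
    refine Finset.sum_eq_zero fun k _ => Finset.sum_eq_zero fun c2 _ => ?_
    by_cases h1 : b = c2
    · subst h1
      by_cases h2 : j0 = j ∧ j0 = k
      · obtain ⟨h2a, h2b⟩ := h2
        subst h2b
        rw [if_pos rfl, if_pos ⟨h2a, rfl⟩, hphi0 b]
      · simp [h2]
    · simp [h1]
  · -- norm computation
    have hGU : Gᴴ * G = 1 := by
      simpa [Matrix.star_eq_conjTranspose] using Matrix.mem_unitaryGroup_iff'.mp hG
    have hGU2 : G * Gᴴ = 1 := by
      simpa [Matrix.star_eq_conjTranspose] using Matrix.mem_unitaryGroup_iff.mp hG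
    have hK1 : (G ⊗ₖ (1 : Matrix (Fin d) (Fin d) ℂ))ᴴ *
        (G ⊗ₖ (1 : Matrix (Fin d) (Fin d) ℂ)) = 1 := by
      rw [kron_conjTranspose, Matrix.conjTranspose_one, ← mul_kronecker_mul, hGU, one_mul,
        Matrix.one_kronecker_one]
    have hK2 : (Gᴴ ⊗ₖ (1 : Matrix (Fin d) (Fin d) ℂ))ᴴ *
        (Gᴴ ⊗ₖ (1 : Matrix (Fin d) (Fin d) ℂ)) = 1 := by
      rw [kron_conjTranspose, Matrix.conjTranspose_one, ← mul_kronecker_mul,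
        Matrix.conjTranspose_conjTranspose, hGU2, one_mul, Matrix.one_kronecker_one]
    have hS := select_unitary U hU
    have hnx : ∑ p, ‖x p‖ ^ 2 = 1 := by
      rw [hx, hW, ← Matrix.mulVec_mulVec, ← Matrix.mulVec_mulVec,
        unitary_norm _ hK2, unitary_norm _ hS, unitary_norm _ hK1,
        Fintype.sum_prod_type]
      have hterm : ∀ (j : Fin J) (b : Fin d), ‖vecKron e0 ψ (j, b)‖ ^ 2 =
          if j = j0 then ‖ψ b‖ ^ 2 else 0 := by
        intro j b
        simp only [vecKron, he0, Pi.single_apply]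
        by_cases h : j = j0 <;> simp [h]
      simp only [hterm]
      have : ∀ j : Fin J, (∑ b, if j = j0 then ‖ψ b‖ ^ 2 else 0) =
          if j = j0 then (1:ℝ) else 0 := by
        intro j
        by_cases h : j = j0
        · simp only [h, if_pos]
          simpa using hψ
        · simp [h]
      simp only [this, Finset.sum_ite_eq', Finset.mem_univ, if_true]
    have hnV : ∑ b, ‖(V *ᵥ ψ) b‖ ^ 2 = 1 := by
      rw [unitary_norm V (by simpa [Matrix.star_eq_conjTranspose] using
        Matrix.mem_unitaryGroup_iff'.mp hV) ψ, hψ]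
    have hax : ∀ j, j ≠ j0 → ∀ b, a (j, b) = 0 := by
      intro j hj b
      simp [ha, vecKron, he0, Pi.single_apply, hj]
    have hnorm_inv : ‖((s:ℂ))⁻¹‖ = s⁻¹ := by
      rw [norm_inv, Complex.norm_real, Real.norm_eq_abs, abs_of_pos hs0]
    have hsum_a : ∑ b, ‖a (j0, b)‖ ^ 2 = 1 / s ^ 2 := by
      have hterm : ∀ b, ‖a (j0, b)‖ ^ 2 = (1 / s ^ 2) * ‖(V *ᵥ ψ) b‖ ^ 2 := by
        intro b
        simp only [ha, Pi.smul_apply, smul_eq_mul, vecKron, he0, Pi.single_eq_same, one_mul,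
          norm_mul, mul_pow, hnorm_inv]
        ring
      rw [Finset.sum_congr rfl fun b _ => hterm b, ← Finset.mul_sum, hnV, mul_one]
    have hxa : ∀ b, x (j0, b) = a (j0, b) := by
      intro b
      rw [hxj0 b]
      simp [ha, vecKron, he0, Pi.single_eq_same]
    have hdecomp : ∀ v : Fin J × Fin d → ℂ, ∑ p, ‖v p‖ ^ 2 =
        (∑ b, ‖v (j0, b)‖ ^ 2) + ∑ j ∈ Finset.univ.erase j0, ∑ b, ‖v (j, b)‖ ^ 2 := by
      intro v
      rw [Fintype.sum_prod_type, ← Finset.add_sum_erase Finset.univ _ (Finset.mem_univ j0)]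
    have h1 := hdecomp x
    have h2 := hdecomp (x - a)
    rw [hnx] at h1
    have e1 : ∑ b, ‖x (j0, b)‖ ^ 2 = 1 / s ^ 2 := by
      rw [Finset.sum_congr rfl fun b _ => by rw [hxa b]]
      exact hsum_a
    have e2 : ∑ j ∈ Finset.univ.erase j0, ∑ b, ‖x (j, b)‖ ^ 2 =
        ∑ j ∈ Finset.univ.erase j0, ∑ b, ‖(x - a) (j, b)‖ ^ 2 := by
      refine Finset.sum_congr rfl fun j hj => Finset.sum_congr rfl fun b _ => ?_
      have hjne : j ≠ j0 := (Finset.mem_erase.mp hj).1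
      rw [Pi.sub_apply, hax j hjne b, sub_zero]
    have e3 : ∑ b, ‖(x - a) (j0, b)‖ ^ 2 = 0 := by
      refine Finset.sum_eq_zero fun b _ => ?_
      rw [hphi0 b]
      simp
    rw [e1, e2] at h1
    rw [e3, zero_add] at h2
    have heq : 1 - 1 / s ^ 2 = (s ^ 2 - 1) / s ^ 2 := by
      field_simp
    have hT : ∑ j ∈ Finset.univ.erase j0, ∑ b, ‖(x - a) (j, b)‖ ^ 2 = 1 - 1 / s ^ 2 := by
      linarith
    rw [h2, hT, heq, Real.sqrt_div (by nlinarith : (0:ℝ) ≤ s ^ 2 - 1), Real.sqrt_sq hs0.le]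
end

section
/- Let W be a unitary on ℂ^a ⊗ ℂ^d and V a unitary on ℂ^d such that the compression of W equals V/2, i.e., (e_0† ⊗ I_d) W (e_0 ⊗ I_d) = (1/2)V. Let R = I − 2(E_{0,0} ⊗ I_d) be the reflection about the subspace e_0 ⊗ ℂ^d. Then for every ψ ∈ ℂ^d, −W R W† R W (e_0 ⊗ ψ) = e_0 ⊗ Vψ. -/
open Matrix Kronecker

/-- The isometry `(v ⊗ I_d) : ℂ^d → ℂ^m ⊗ ℂ^d`, `ψ ↦ v ⊗ ψ`, as a matrix. -/
def embedVec {m d : Type*} [DecidableEq d] (v : m → ℂ) : Matrix (m × d) d ℂ :=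
  Matrix.of fun p b => v p.1 * (if p.2 = b then 1 else 0)

/-- Oblivious amplitude amplification: if the compression of a unitary `W` equals `V/2`
for a unitary `V`, and `R = I − 2(E_{0,0} ⊗ I_d)`, then
`−W R W† R W (e₀ ⊗ ψ) = e₀ ⊗ Vψ` for every `ψ`. -/
theorem oblivious_amplitude_amplification (a d : ℕ) (ha : 0 < a)
    (W : Matrix (Fin a × Fin d) (Fin a × Fin d) ℂ)
    (hW : W ∈ Matrix.unitaryGroup (Fin a × Fin d) ℂ)
    (V : Matrix (Fin d) (Fin d) ℂ) (hV : V ∈ Matrix.unitaryGroup (Fin d) ℂ)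
    (hcomp : (embedVec (d := Fin d) (Pi.single (⟨0, ha⟩ : Fin a) 1))ᴴ * W *
        embedVec (Pi.single (⟨0, ha⟩ : Fin a) 1) = (2 : ℂ)⁻¹ • V)
    (R : Matrix (Fin a × Fin d) (Fin a × Fin d) ℂ)
    (hR : R = 1 - (2 : ℂ) •
      ((Matrix.single (⟨0, ha⟩ : Fin a) (⟨0, ha⟩ : Fin a) (1 : ℂ)) ⊗ₖ
        (1 : Matrix (Fin d) (Fin d) ℂ))) :
    ∀ ψ : Fin d → ℂ,
      (-(W * R * Wᴴ * R * W)) *ᵥ vecKron (Pi.single (⟨0, ha⟩ : Fin a) 1) ψ =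
        vecKron (Pi.single (⟨0, ha⟩ : Fin a) 1) (V *ᵥ ψ) := by
  intro ψ
  set v : Fin a → ℂ := Pi.single (⟨0, ha⟩ : Fin a) 1 with hv
  set P : Matrix (Fin a × Fin d) (Fin d) ℂ := embedVec v with hPdef
  have h3 : ∀ φ : Fin d → ℂ, vecKron v φ = P *ᵥ φ := by
    intro φ; funext p
    simp [vecKron, embedVec, mulVec, dotProduct, hPdef, ite_mul]
  have h1 : Pᴴ * P = 1 := by
    ext b c
    simp [hPdef, embedVec, mul_apply, Matrix.one_apply, Fintype.sum_prod_type, hv,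
      Pi.single_apply, ite_mul, mul_ite, Finset.sum_ite_eq, Finset.sum_ite_eq']
    exact if_congr eq_comm rfl rfl
  have h2 : P * Pᴴ = (Matrix.single (⟨0, ha⟩ : Fin a) (⟨0, ha⟩ : Fin a) (1 : ℂ)) ⊗ₖ
      (1 : Matrix (Fin d) (Fin d) ℂ) := by
    ext p q
    simp [hPdef, embedVec, mul_apply, Matrix.single, Matrix.one_apply, hv,
      Pi.single_apply, ite_mul, mul_ite, Finset.sum_ite_eq, Finset.sum_ite_eq', eq_comm,
      Matrix.kroneckerMap_apply]
    ring_nf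
    split_ifs <;> simp_all
  have hR' : R = 1 - (2 : ℂ) • (P * Pᴴ) := by rw [hR, h2]
  have hWW : Wᴴ * W = 1 := by
    simpa [Matrix.star_eq_conjTranspose] using (Matrix.mem_unitaryGroup_iff'.mp hW)
  have hWW' : W * Wᴴ = 1 := by
    simpa [Matrix.star_eq_conjTranspose] using (Matrix.mem_unitaryGroup_iff.mp hW)
  have hVV : Vᴴ * V = 1 := by
    simpa [Matrix.star_eq_conjTranspose] using (Matrix.mem_unitaryGroup_iff'.mp hV)
  have hM : Pᴴ * W * P = (2 : ℂ)⁻¹ • V := hcomp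
  have e0 : Pᴴ * (W * P) = (2 : ℂ)⁻¹ • V := by rw [← Matrix.mul_assoc]; exact hM
  have e1 : Pᴴ * (Wᴴ * P) = (2 : ℂ)⁻¹ • Vᴴ := by
    have := congrArg Matrix.conjTranspose hM
    simpa [Matrix.conjTranspose_mul, Matrix.mul_assoc, Complex.star_def] using this
  have t1 : R * (W * P) = W * P - P * V := by
    rw [hR', Matrix.sub_mul, Matrix.one_mul, Matrix.smul_mul, Matrix.mul_assoc, e0,
      Matrix.mul_smul, smul_smul]
    norm_num
  have t2 : Wᴴ * (W * P - P * V) = P - Wᴴ * (P * V) := by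
    rw [Matrix.mul_sub, ← Matrix.mul_assoc, hWW, Matrix.one_mul]
  have t3 : R * (P - Wᴴ * (P * V)) = -(Wᴴ * (P * V)) := by
    rw [hR', Matrix.sub_mul, Matrix.one_mul, Matrix.smul_mul, Matrix.mul_sub,
      Matrix.mul_assoc P Pᴴ P, h1, Matrix.mul_one,
      Matrix.mul_assoc P Pᴴ (Wᴴ * (P * V)), ← Matrix.mul_assoc Wᴴ P V,
      ← Matrix.mul_assoc Pᴴ (Wᴴ * P) V]
    rw [e1, Matrix.smul_mul, hVV, Matrix.mul_smul, Matrix.mul_one]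
    module
  have t4 : W * -(Wᴴ * (P * V)) = -(P * V) := by
    rw [Matrix.mul_neg, ← Matrix.mul_assoc, hWW', Matrix.one_mul]
  have key : (-(W * R * Wᴴ * R * W)) * P = P * V := by
    calc (-(W * R * Wᴴ * R * W)) * P
        = -(W * (R * (Wᴴ * (R * (W * P))))) := by
          rw [Matrix.neg_mul]; simp only [Matrix.mul_assoc]
      _ = P * V := by rw [t1, t2, t3, t4, neg_neg]
  calc (-(W * R * Wᴴ * R * W)) *ᵥ vecKron v ψ
      = ((-(W * R * Wᴴ * R * W)) * P) *ᵥ ψ := by rw [h3, mulVec_mulVec]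
    _ = (P * V) *ᵥ ψ := by rw [key]
    _ = vecKron v (V *ᵥ ψ) := by rw [h3, mulVec_mulVec]
end

section
/- Let m, a, d ∈ ℕ with m ≥ 1. For i = 1, …, m let W_i be a unitary on ℂ^a ⊗ ℂ^d, A_i a d×d matrix, and α_i > 0 such that the compression of W_i equals A_i/α_i, i.e., (e_0† ⊗ I_d) W_i (e_0 ⊗ I_d) = A_i/α_i. Set α = Σ_i α_i and g = (1/√α) Σ_{i=1}^{m} √α_i e_i ∈ ℂ^m. Then (g† ⊗ e_0† ⊗ I_d) (Σ_{i=1}^{m} E_{i,i} ⊗ W_i) (g ⊗ e_0 ⊗ I_d) = (Σ_{i=1}^{m} A_i)/α; that is, a weighted linear combination of block encodings is a block encoding of the sum with normalization α. -/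
open Matrix Kronecker

lemma embed_comp {m d : Type*} [Fintype m] [Fintype d] [DecidableEq d]
    (v : m → ℂ) (M : Matrix (m × d) (m × d) ℂ) (b b' : d) :
    (((embedVec (d := d) v)ᴴ * M * embedVec (d := d) v : Matrix d d ℂ)) b b'
      = ∑ i, ∑ j, (starRingEnd ℂ) (v i) * v j * M (i, b) (j, b') := by
  simp only [Matrix.mul_apply, embedVec, Matrix.conjTranspose_apply, Matrix.of_apply,
    Fintype.sum_prod_type, star_mul', apply_ite (star : ℂ → ℂ), star_one, star_zero,
    mul_ite, ite_mul, mul_one, mul_zero, zero_mul, one_mul,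
    Finset.sum_ite_eq, Finset.sum_ite_eq', Finset.mem_univ, if_true, Finset.sum_mul]
  conv_lhs => rw [Finset.sum_comm]
  refine Finset.sum_congr rfl fun i _ => ?_
  refine Finset.sum_congr rfl fun j _ => ?_
  simp only [starRingEnd_apply]; ring

lemma embed_comp_single {m d : Type*} [Fintype m] [Fintype d] [DecidableEq m] [DecidableEq d]
    (z : m) (M : Matrix (m × d) (m × d) ℂ) (b b' : d) :
    (((embedVec (d := d) (Pi.single z (1:ℂ)))ᴴ * M * embedVec (d := d) (Pi.single z 1) : Matrix d d ℂ)) b b'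
      = M (z, b) (z, b') := by
  rw [embed_comp]
  simp [Pi.single_apply]

/-- A weighted linear combination of block encodings is a block encoding of the sum:
if `(e₀† ⊗ I_d) W_i (e₀ ⊗ I_d) = A_i/α_i` then with `g = (1/√α) Σ_i √α_i e_i`,
`(g† ⊗ e₀† ⊗ I_d)(Σ_i E_{i,i} ⊗ W_i)(g ⊗ e₀ ⊗ I_d) = (Σ_i A_i)/α` where `α = Σ_i α_i`. -/
theorem lcu_of_block_encodings (m a d : ℕ) (hm : 1 ≤ m) (ha : 0 < a)
    (W : Fin m → Matrix (Fin a × Fin d) (Fin a × Fin d) ℂ)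
    (hW : ∀ i, W i ∈ Matrix.unitaryGroup (Fin a × Fin d) ℂ)
    (A : Fin m → Matrix (Fin d) (Fin d) ℂ)
    (α : Fin m → ℝ) (hα : ∀ i, 0 < α i)
    (hcomp : ∀ i, (embedVec (d := Fin d) (Pi.single (⟨0, ha⟩ : Fin a) 1))ᴴ * W i *
        embedVec (d := Fin d) (Pi.single (⟨0, ha⟩ : Fin a) 1) = ((α i : ℂ))⁻¹ • A i)
    (αtot : ℝ) (hαtot : αtot = ∑ i, α i) :
    (embedVec (d := Fin d) (Pi.single (⟨0, ha⟩ : Fin a) 1))ᴴ *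
        ((embedVec (d := Fin a × Fin d) (fun i : Fin m => ((Real.sqrt (α i) / Real.sqrt αtot : ℝ) : ℂ)))ᴴ *
          (∑ i : Fin m, Matrix.single i i (1 : ℂ) ⊗ₖ W i) *
          embedVec (d := Fin a × Fin d) (fun i : Fin m => ((Real.sqrt (α i) / Real.sqrt αtot : ℝ) : ℂ))) *
        embedVec (d := Fin d) (Pi.single (⟨0, ha⟩ : Fin a) 1) =
      ((αtot : ℂ))⁻¹ • ∑ i : Fin m, A i := by
  have hαtotpos : 0 < αtot := by
    rw [hαtot]
    haveI : Nonempty (Fin m) := Fin.pos_iff_nonempty.mp hm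
    exact Finset.sum_pos (fun i _ => hα i) Finset.univ_nonempty
  set g : Fin m → ℂ := fun i => ((Real.sqrt (α i) / Real.sqrt αtot : ℝ) : ℂ) with hg
  set e0 : Fin a := ⟨0, ha⟩
  ext b b'
  rw [embed_comp_single, embed_comp]
  have hWval : ∀ i, W i (e0, b) (e0, b') = (α i : ℂ)⁻¹ * A i b b' := by
    intro i
    have := congrFun (congrFun (hcomp i) b) b'
    rw [embed_comp_single] at this
    simpa using this
  have hkey : ∀ i j : Fin m,
      (∑ k : Fin m, Matrix.single k k (1:ℂ) ⊗ₖ W k) (i, (e0, b)) (j, (e0, b'))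
        = if i = j then W i (e0, b) (e0, b') else 0 := by
    intro i j
    simp only [Matrix.sum_apply, Matrix.kroneckerMap_apply, Matrix.single, Matrix.of_apply]
    by_cases h : i = j
    · subst h
      rw [Finset.sum_eq_single i]
      · simp
      · intro k _ hk; simp only [mul_ite, mul_zero, mul_one, ite_mul, zero_mul, one_mul]
        exact if_neg (fun h => hk h.1)
      · simp
    · simp only [if_neg h]
      refine Finset.sum_eq_zero fun k _ => ?_
      simp only [mul_ite, mul_zero, mul_one, ite_mul, zero_mul, one_mul]
      exact if_neg (fun hh => h (hh.1.symm.trans hh.2))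
  have hsum : ∀ i : Fin m, ∑ j : Fin m, (starRingEnd ℂ) (g i) * g j *
      (∑ k : Fin m, Matrix.single k k (1:ℂ) ⊗ₖ W k) (i, (e0, b)) (j, (e0, b'))
        = (αtot : ℂ)⁻¹ * A i b b' := by
    intro i
    rw [Finset.sum_eq_single i]
    · rw [hkey, if_pos rfl, hWval]
      have hsq : (g i) * (g i) = ((α i / αtot : ℝ) : ℂ) := by
        rw [hg]
        push_cast
        rw [div_mul_div_comm, ← Complex.ofReal_mul, ← Complex.ofReal_mul,
          Real.mul_self_sqrt (hα i).le, Real.mul_self_sqrt hαtotpos.le]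
      have hcg : (starRingEnd ℂ) (g i) = g i := by
        rw [hg]; simp [Complex.conj_ofReal]
      rw [hcg, mul_assoc, mul_comm ((α i : ℂ)⁻¹) (A i b b'), ← mul_assoc, hsq]
      push_cast
      rw [div_eq_mul_inv]
      have hαne : (α i : ℂ) ≠ 0 := by
        exact_mod_cast (hα i).ne'
      field_simp
    · intro j _ hj
      rw [hkey, if_neg (Ne.symm hj), mul_zero]
    · simp
  calc ∑ i : Fin m, ∑ j : Fin m, (starRingEnd ℂ) (g i) * g j *
      (∑ k : Fin m, Matrix.single k k (1:ℂ) ⊗ₖ W k) (i, (e0, b)) (j, (e0, b'))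
      = ∑ i : Fin m, (αtot : ℂ)⁻¹ * A i b b' := Finset.sum_congr rfl fun i _ => hsum i
    _ = ((αtot : ℂ)⁻¹ • ∑ i : Fin m, A i) b b' := by
        simp [Finset.mul_sum, Matrix.sum_apply]
end

section
/- Let a_1, a_2, d ∈ ℕ, let W_1 be an operator on ℂ^{a_1} ⊗ ℂ^d with compression A_1 and W_2 an operator on ℂ^{a_2} ⊗ ℂ^d with compression A_2. Let W̃_1 be the operator on ℂ^{a_1} ⊗ ℂ^{a_2} ⊗ ℂ^d that acts as W_1 on the first and third tensor factors and as the identity on the second, and W̃_2 the operator acting as W_2 on the second and third factors and as the identity on the first. Then ((e_0 ⊗ e_0)† ⊗ I_d)(W̃_1 W̃_2)((e_0 ⊗ e_0) ⊗ I_d) = A_1 A_2; that is, composing block encodings on disjoint ancilla registers yields a block encoding of the product. -/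
open Matrix

/-- Composing block encodings on disjoint ancilla registers yields a block encoding of
the product: if `W₁` on `ℂ^{a₁} ⊗ ℂ^d` has compression `A₁` and `W₂` on `ℂ^{a₂} ⊗ ℂ^d`
has compression `A₂`, then lifting `W₁` to act on the first and third factors of
`ℂ^{a₁} ⊗ ℂ^{a₂} ⊗ ℂ^d` and `W₂` on the second and third, the compression of
`W̃₁ W̃₂` along `e₀ ⊗ e₀` is `A₁ A₂`. -/
theorem block_encoding_product (a₁ a₂ d : ℕ) (ha₁ : 0 < a₁) (ha₂ : 0 < a₂)
    (W₁ : Matrix (Fin a₁ × Fin d) (Fin a₁ × Fin d) ℂ)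
    (W₂ : Matrix (Fin a₂ × Fin d) (Fin a₂ × Fin d) ℂ)
    (A₁ A₂ : Matrix (Fin d) (Fin d) ℂ)
    (hW₁ : (embedVec (d := Fin d) (Pi.single (⟨0, ha₁⟩ : Fin a₁) 1))ᴴ * W₁ *
        embedVec (d := Fin d) (Pi.single (⟨0, ha₁⟩ : Fin a₁) 1) = A₁)
    (hW₂ : (embedVec (d := Fin d) (Pi.single (⟨0, ha₂⟩ : Fin a₂) 1))ᴴ * W₂ *
        embedVec (d := Fin d) (Pi.single (⟨0, ha₂⟩ : Fin a₂) 1) = A₂)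
    (W₁lift W₂lift :
      Matrix (Fin a₁ × (Fin a₂ × Fin d)) (Fin a₁ × (Fin a₂ × Fin d)) ℂ)
    (hW₁lift : W₁lift = Matrix.of fun p q =>
      W₁ (p.1, p.2.2) (q.1, q.2.2) * (if p.2.1 = q.2.1 then 1 else 0))
    (hW₂lift : W₂lift = Matrix.of fun p q =>
      (if p.1 = q.1 then 1 else 0) * W₂ p.2 q.2) :
    (embedVec (d := Fin d) (Pi.single (⟨0, ha₂⟩ : Fin a₂) 1))ᴴ *
        ((embedVec (d := Fin a₂ × Fin d) (Pi.single (⟨0, ha₁⟩ : Fin a₁) 1))ᴴ * (W₁lift * W₂lift) *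
          embedVec (d := Fin a₂ × Fin d) (Pi.single (⟨0, ha₁⟩ : Fin a₁) 1)) *
        embedVec (d := Fin d) (Pi.single (⟨0, ha₂⟩ : Fin a₂) 1) =
      A₁ * A₂ := by
  set E₁ : Matrix (Fin a₁ × (Fin a₂ × Fin d)) (Fin a₂ × Fin d) ℂ :=
    embedVec (Pi.single (⟨0, ha₁⟩ : Fin a₁) 1) with hE₁
  set E₂ : Matrix (Fin a₂ × Fin d) (Fin d) ℂ :=
    embedVec (Pi.single (⟨0, ha₂⟩ : Fin a₂) 1) with hE₂
  have hA : ∀ s t, A₁ s t = W₁ ((⟨0, ha₁⟩, s)) ((⟨0, ha₁⟩, t)) := by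
    intro s t
    rw [← hW₁]
    simp [Matrix.mul_apply, embedVec, conjTranspose_apply, Pi.single_apply,
      Fintype.sum_prod_type, apply_ite (starRingEnd ℂ), ite_mul, mul_ite]
  have key1 : W₂lift * E₁ = E₁ * W₂ := by
    subst hW₂lift
    ext ⟨b, x⟩ z
    simp [Matrix.mul_apply, hE₁, embedVec, Pi.single_apply, Fintype.sum_prod_type,
      apply_ite (starRingEnd ℂ), ite_mul, mul_ite, mul_comm]
  have key2 : E₂ᴴ * (E₁ᴴ * W₁lift * E₁) = A₁ * E₂ᴴ := by
    subst hW₁lift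
    ext t ⟨b, s⟩
    simp [Matrix.mul_apply, hE₁, hE₂, embedVec, conjTranspose_apply, Pi.single_apply,
      Fintype.sum_prod_type, hA, apply_ite (starRingEnd ℂ), ite_mul, mul_ite, ite_and,
      mul_comm]
  calc E₂ᴴ * (E₁ᴴ * (W₁lift * W₂lift) * E₁) * E₂
      = E₂ᴴ * (E₁ᴴ * W₁lift * (W₂lift * E₁)) * E₂ := by simp only [Matrix.mul_assoc]
    _ = E₂ᴴ * (E₁ᴴ * W₁lift * E₁) * W₂ * E₂ := by rw [key1]; simp only [Matrix.mul_assoc]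
    _ = A₁ * E₂ᴴ * W₂ * E₂ := by rw [key2]
    _ = A₁ * A₂ := by rw [← hW₂]; simp only [Matrix.mul_assoc]
end

section
/- Let W be a unitary on ℂ^a ⊗ ℂ^d with compression M, let K ≥ 1, and let c_0, …, c_K ≥ 0 with C = Σ_{k=0}^{K} c_k > 0. On the space (ℂ²)^{⊗K} ⊗ (ℂ^a)^{⊗K} ⊗ ℂ^d, let b = (1/√C) Σ_{k=0}^{K} √c_k |1^k 0^{K−k}⟩ ∈ (ℂ²)^{⊗K}, where |1^k 0^{K−k}⟩ is the computational basis vector whose first k bits are 1 and remaining bits are 0, and for each i ∈ {1,…,K} let S_i = |0⟩⟨0|_i ⊗ I + |1⟩⟨1|_i ⊗ (−i·W_{(i)}), where |0⟩⟨0|_i, |1⟩⟨1|_i act on the i-th qubit factor and W_{(i)} acts as W on the i-th copy of ℂ^a together with ℂ^d (identity elsewhere). Then (b† ⊗ (e_0^{⊗K})† ⊗ I_d)(S_1 S_2 ⋯ S_K)(b ⊗ e_0^{⊗K} ⊗ I_d) = (1/C) Σ_{k=0}^{K} c_k (−i)^k M^k. In particular, taking M = H/α for a matrix H with block encoding W and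 c_k = (αt)^k/k!, the compression equals (1/C) Σ_{k=0}^{K} ((−it)^k/k!) H^k, the truncated Taylor series of exp(−iHt). -/
open Matrix

/-- The controlled step `S_i = |0⟩⟨0|_i ⊗ I + |1⟩⟨1|_i ⊗ (−i·W_{(i)})` on
`(ℂ²)^{⊗K} ⊗ (ℂ^a)^{⊗K} ⊗ ℂ^d`, where `W_{(i)}` acts as `W` on the `i`-th copy of
`ℂ^a` together with `ℂ^d` and as the identity elsewhere. -/
noncomputable def taylorStep (K a d : ℕ)
    (W : Matrix (Fin a × Fin d) (Fin a × Fin d) ℂ) (i : Fin K) :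
    Matrix ((Fin K → Bool) × ((Fin K → Fin a) × Fin d))
      ((Fin K → Bool) × ((Fin K → Fin a) × Fin d)) ℂ :=
  Matrix.of fun p q =>
    (if p.1 = q.1 then (1 : ℂ) else 0) *
      (if p.1 i then
          (-Complex.I) * W (p.2.1 i, p.2.2) (q.2.1 i, q.2.2) *
            (if p.2.1 = Function.update q.2.1 i (p.2.1 i) then 1 else 0)
        else if p.2 = q.2 then 1 else 0)

/-- The unary-encoded control state `b = (1/√C) Σ_{k=0}^{K} √c_k |1^k 0^{K−k}⟩`. -/
noncomputable def unaryState (K : ℕ) (c : ℕ → ℝ) (C : ℝ) : (Fin K → Bool) → ℂ :=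
  ∑ k ∈ Finset.range (K + 1),
    ((Real.sqrt (c k) / Real.sqrt C : ℝ) : ℂ) •
      (Pi.single (fun i : Fin K => decide ((i : ℕ) < k)) 1 : (Fin K → Bool) → ℂ)

lemma compress_apply {m d' : Type*} [Fintype m] [Fintype d'] [DecidableEq d']
    (v : m → ℂ) (X : Matrix (m × d') (m × d') ℂ) (x y : d') :
    (((embedVec (d := d') v)ᴴ * X * embedVec (d := d') v) : Matrix d' d' ℂ) x y =
      ∑ s : m, ∑ s' : m, (starRingEnd ℂ) (v s) * X (s, x) (s', y) * v s' := by
  simp only [Matrix.mul_apply, Matrix.conjTranspose_apply, embedVec, Matrix.of_apply,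
    Fintype.sum_prod_type,
    mul_ite, mul_one, mul_zero, ite_mul, zero_mul, Finset.sum_ite_eq, Finset.sum_ite_eq',
    Finset.mem_univ, if_true, Finset.sum_mul, Finset.mul_sum]
  simp only [apply_ite (star : ℂ → ℂ), star_zero, ite_mul, zero_mul,
    Finset.sum_ite_eq', Finset.mem_univ, if_true, starRingEnd_apply]
  exact Finset.sum_comm

noncomputable def blk {K a d : ℕ} (W : Matrix (Fin a × Fin d) (Fin a × Fin d) ℂ)
    (s : Fin K → Bool) (u v : Fin K → Fin a) (i : Fin K) : Matrix (Fin d) (Fin d) ℂ :=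
  if s i then (-Complex.I) • (Matrix.of fun x y => W (u i, x) (v i, y))
  else if u i = v i then 1 else 0

lemma delta_prod {K a : ℕ} (u v : Fin K → Fin a) :
    (if u = v then (1:ℂ) else 0) = ∏ j : Fin K, (if u j = v j then (1:ℂ) else 0) := by
  by_cases h : u = v
  · simp [h]
  · rw [if_neg h]
    obtain ⟨j, hj⟩ := Function.ne_iff.mp h
    exact (Finset.prod_eq_zero (Finset.mem_univ j) (by simp [hj])).symm

lemma sum_update {K a : ℕ} (i : Fin K) (u : Fin K → Fin a) (F : (Fin K → Fin a) → ℂ) :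
    (∑ w : Fin K → Fin a, if u = Function.update w i (u i) then F w else 0)
      = ∑ m : Fin a, F (Function.update u i m) := by
  classical
  have h1 : ∀ w : Fin K → Fin a,
      (u = Function.update w i (u i)) ↔ w ∈ Finset.univ.image (fun m : Fin a => Function.update u i m) := by
    intro w
    constructor
    · intro h
      simp only [Finset.mem_image, Finset.mem_univ, true_and]
      refine ⟨w i, ?_⟩
      funext j
      by_cases hj : j = i
      · subst hj; simp
      · rw [Function.update_of_ne hj]
        have := congrFun h j
        rw [Function.update_of_ne hj] at this
        exact this
    · rintro hw
      simp only [Finset.mem_image, Finset.mem_univ, true_and] at hw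
      obtain ⟨m, rfl⟩ := hw
      funext j
      by_cases hj : j = i
      · subst hj; simp
      · rw [Function.update_of_ne hj, Function.update_of_ne hj]
  simp only [h1]
  rw [Finset.sum_ite_mem, Finset.univ_inter,
    Finset.sum_image (fun x _ y _ h => Function.update_injective u i h)]

lemma prod_entry {K a d : ℕ} (W : Matrix (Fin a × Fin d) (Fin a × Fin d) ℂ)
    (L : List (Fin K)) (hL : L.Nodup) (s s' : Fin K → Bool)
    (v : Fin K → Fin a) (y : Fin d) :
    ∀ (u : Fin K → Fin a) (x : Fin d),
    ((L.map (taylorStep K a d W)).prod : Matrix _ _ ℂ) (s, (u, x)) (s', (v, y)) =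
      (if s = s' then (1:ℂ) else 0) *
      (∏ j : Fin K, if j ∈ L then (1:ℂ) else if u j = v j then 1 else 0) *
      (((L.map (blk W s u v)).prod : Matrix (Fin d) (Fin d) ℂ) x y) := by
  induction L with
  | nil =>
    intro u x
    simp only [List.map_nil, List.prod_nil, Matrix.one_apply, List.not_mem_nil, if_false]
    rw [← delta_prod]
    by_cases h1 : s = s' <;> by_cases h2 : u = v <;> by_cases h3 : x = y <;>
      simp [h1, h2, h3, Prod.ext_iff]
  | cons i L' ih =>
    intro u x
    have hiL : i ∉ L' := (List.nodup_cons.mp hL).1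
    have hL' : L'.Nodup := (List.nodup_cons.mp hL).2
    rw [List.map_cons, List.prod_cons, Matrix.mul_apply]
    rw [Fintype.sum_prod_type, Finset.sum_comm]
    simp only [taylorStep, Matrix.of_apply, ite_mul, one_mul, zero_mul,
      Finset.sum_ite_eq, Finset.mem_univ, if_true]
    by_cases hsi : s i
    · simp only [hsi, if_true]
      rw [Fintype.sum_prod_type, Finset.sum_comm]
      have step1 : ∀ z : Fin d,
          (∑ w : Fin K → Fin a,
            (-Complex.I * W (u i, x) (w i, z) * if u = Function.update w i (u i) then 1 else 0) *
              (List.map (taylorStep K a d W) L').prod (s, w, z) (s', v, y))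
          = ∑ m : Fin a, -Complex.I * W (u i, x) (m, z) *
              (List.map (taylorStep K a d W) L').prod (s, Function.update u i m, z) (s', v, y) := by
        intro z
        have h2 := sum_update i u (fun w => -Complex.I * W (u i, x) (w i, z) *
            (List.map (taylorStep K a d W) L').prod (s, w, z) (s', v, y))
        simp only [Function.update_self] at h2
        rw [← h2]
        refine Finset.sum_congr rfl fun w _ => ?_
        by_cases h : u = Function.update w i (u i)
        · rw [if_pos h, if_pos h]; ring
        · rw [if_neg h, if_neg h]; ring
      rw [Finset.sum_congr rfl (fun z _ => step1 z)]
      have step2 : ∀ (z : Fin d) (m : Fin a),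
          (List.map (taylorStep K a d W) L').prod (s, Function.update u i m, z) (s', v, y)
          = (if s = s' then (1:ℂ) else 0) * ((if m = v i then (1:ℂ) else 0) *
              ∏ j ∈ Finset.univ.erase i, if j ∈ L' then (1:ℂ) else if u j = v j then 1 else 0) *
            ((List.map (blk W s u v) L').prod z y) := by
        intro z m
        rw [ih hL' (Function.update u i m) z]
        have hmap : List.map (blk W s (Function.update u i m) v) L' = List.map (blk W s u v) L' := by
          refine List.map_congr_left fun j hj => ?_
          have hji : j ≠ i := fun h => hiL (h ▸ hj)
          simp [blk, Function.update_of_ne hji]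
        rw [hmap, ← Finset.mul_prod_erase Finset.univ _ (Finset.mem_univ i)]
        have herase : (∏ j ∈ Finset.univ.erase i,
              if j ∈ L' then (1:ℂ) else if Function.update u i m j = v j then 1 else 0)
            = ∏ j ∈ Finset.univ.erase i, if j ∈ L' then (1:ℂ) else if u j = v j then 1 else 0 := by
          refine Finset.prod_congr rfl fun j hj => ?_
          rw [Function.update_of_ne (Finset.mem_erase.mp hj).1]
        rw [herase]
        simp [hiL]
      rw [Finset.sum_congr rfl (fun z _ => Finset.sum_congr rfl (fun m _ => by rw [step2 z m]))]
      by_cases hss : s = s'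
      · subst hss
        simp only [eq_self_iff_true, if_true]
        rw [List.map_cons, List.prod_cons]
        have hbi : blk W s u v i
            = (-Complex.I) • (Matrix.of fun x' y' => W (u i, x') (v i, y')) := by
          simp [blk, hsi]
        rw [hbi, Matrix.smul_mul, Matrix.smul_apply, Matrix.mul_apply,
            ← Finset.mul_prod_erase Finset.univ _ (Finset.mem_univ i)]
        have hprodeq2 : (∏ j ∈ Finset.univ.erase i,
              if j ∈ i :: L' then (1:ℂ) else if u j = v j then 1 else 0)
            = ∏ j ∈ Finset.univ.erase i, if j ∈ L' then (1:ℂ) else if u j = v j then 1 else 0 := by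
          refine Finset.prod_congr rfl fun j hj => ?_
          have hjne : j ≠ i := (Finset.mem_erase.mp hj).1
          simp [List.mem_cons, hjne]
        rw [hprodeq2]
        simp only [List.mem_cons, true_or, if_true, one_mul]
        have hcol : ∀ z : Fin d,
            (∑ m : Fin a, -Complex.I * W (u i, x) (m, z) *
              (((if m = v i then (1:ℂ) else 0) *
                  ∏ j ∈ Finset.univ.erase i, if j ∈ L' then (1:ℂ) else if u j = v j then 1 else 0) *
                (List.map (blk W s u v) L').prod z y))
            = -Complex.I * W (u i, x) (v i, z) *
                ((∏ j ∈ Finset.univ.erase i, if j ∈ L' then (1:ℂ) else if u j = v j then 1 else 0) *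
                  (List.map (blk W s u v) L').prod z y) := by
          intro z
          rw [Finset.sum_congr rfl (fun m (_ : m ∈ Finset.univ) => show _ = if m = v i then -Complex.I * W (u i, x) (m, z) *
                ((∏ j ∈ Finset.univ.erase i, if j ∈ L' then (1:ℂ) else if u j = v j then 1 else 0) *
                  (List.map (blk W s u v) L').prod z y) else 0 from by
            by_cases hm : m = v i
            · rw [if_pos hm, if_pos hm]; ring
            · rw [if_neg hm, if_neg hm]; ring)]
          rw [Finset.sum_ite_eq' Finset.univ (v i)]
          simp
        rw [Finset.sum_congr rfl (fun z _ => hcol z)]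
        simp only [smul_eq_mul, Finset.mul_sum, Matrix.of_apply]
        refine Finset.sum_congr rfl fun z _ => ?_
        ring
      · simp only [if_neg hss, if_false, mul_zero, zero_mul, mul_assoc]
        simp [Finset.sum_const_zero]
    · simp only [hsi, Bool.false_eq_true, if_false]
      rw [Fintype.sum_prod_type, Finset.sum_comm]
      simp only [Prod.mk.injEq, ite_and,
        Finset.sum_ite_eq, Finset.mem_univ, if_true]
      rw [ih hL' u x]
      rw [List.map_cons, List.prod_cons]
      have hbi : blk W s u v i = if u i = v i then (1 : Matrix (Fin d) (Fin d) ℂ) else 0 := by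
        simp [blk, hsi]
      rw [hbi]
      rw [← Finset.mul_prod_erase Finset.univ _ (Finset.mem_univ i),
          ← Finset.mul_prod_erase Finset.univ
            (fun j => if j ∈ i :: L' then (1:ℂ) else if u j = v j then 1 else 0) (Finset.mem_univ i)]
      have hprodeq : (∏ j ∈ Finset.univ.erase i, if j ∈ L' then (1:ℂ) else if u j = v j then 1 else 0)
          = ∏ j ∈ Finset.univ.erase i, if j ∈ i :: L' then (1:ℂ) else if u j = v j then 1 else 0 := by
        refine Finset.prod_congr rfl fun j hj => ?_
        have hjne : j ≠ i := (Finset.mem_erase.mp hj).1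
        simp [List.mem_cons, hjne]
      rw [hprodeq]
      simp only [List.mem_cons, if_pos (Or.inl rfl), if_pos rfl, one_mul, if_neg hiL]
      by_cases huv : u i = v i
      · simp only [huv, if_true, Matrix.one_mul, one_mul]
        by_cases hss : s = s' <;> simp [hss]
      · simp only [huv, if_false, Matrix.zero_mul, Matrix.zero_apply, zero_mul, mul_zero]
        by_cases hss : s = s' <;> simp [hss]


lemma prod_if_lt {d : ℕ} (A : Matrix (Fin d) (Fin d) ℂ) :
    ∀ (n k : ℕ), k ≤ n →
      ((List.finRange n).map (fun i : Fin n => if (i:ℕ) < k then A else 1)).prod = A ^ k := by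
  intro n
  induction n with
  | zero =>
    intro k hk
    interval_cases k
    simp
  | succ n ihn =>
    intro k hk
    rw [List.finRange_succ, List.map_cons, List.map_map, List.prod_cons]
    cases k with
    | zero =>
      simp only [Nat.not_lt_zero, if_false, pow_zero]
      rw [List.prod_eq_one, one_mul]
      intro z hz
      simp only [List.mem_map, Function.comp_apply] at hz
      obtain ⟨j, _, rfl⟩ := hz
      simp
    | succ k =>
      rw [if_pos (by simp)]
      have hcomp : ((fun i : Fin (n+1) => if (i:ℕ) < k + 1 then A else 1) ∘ Fin.succ)
          = fun i : Fin n => if (i:ℕ) < k then A else 1 := by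
        funext i
        simp [Function.comp, Fin.val_succ, Nat.succ_lt_succ_iff]
      rw [hcomp, ihn k (Nat.succ_le_succ_iff.mp hk), (pow_succ' A k).symm]

lemma unary_inj {K : ℕ} {k l : ℕ} (hk : k ≤ K) (hl : l ≤ K)
    (h : (fun i : Fin K => decide ((i:ℕ) < k)) = fun i : Fin K => decide ((i:ℕ) < l)) :
    k = l := by
  by_contra hne
  rcases Nat.lt_or_ge k l with hlt | hge
  · have hkK : k < K := lt_of_lt_of_le hlt hl
    have h2 := congrFun h ⟨k, hkK⟩
    rw [decide_eq_decide] at h2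
    exact absurd (h2.mpr hlt) (lt_irrefl k)
  · have hlk : l < k := lt_of_le_of_ne hge fun e => hne e.symm
    have hlK : l < K := lt_of_lt_of_le hlk hk
    have h2 := congrFun h ⟨l, hlK⟩
    rw [decide_eq_decide] at h2
    exact absurd (h2.mp hlk) (lt_irrefl l)

/-- Truncated-Taylor-series block encoding by unary encoding: if the unitary `W` is a
block encoding of `M`, then compressing `S_1 S_2 ⋯ S_K` by the prepared state
`b ⊗ e₀^{⊗K}` yields `(1/C) Σ_{k=0}^{K} c_k (−i)^k M^k`. -/
theorem truncated_taylor_block_encoding (K a d : ℕ) (hK : 1 ≤ K) (ha : 0 < a)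
    (W : Matrix (Fin a × Fin d) (Fin a × Fin d) ℂ)
    (hW : W ∈ Matrix.unitaryGroup (Fin a × Fin d) ℂ)
    (M : Matrix (Fin d) (Fin d) ℂ)
    (hM : (embedVec (d := Fin d) (Pi.single (⟨0, ha⟩ : Fin a) 1))ᴴ * W *
        embedVec (d := Fin d) (Pi.single (⟨0, ha⟩ : Fin a) 1) = M)
    (c : ℕ → ℝ) (hc : ∀ k ≤ K, 0 ≤ c k)
    (C : ℝ) (hC : C = ∑ k ∈ Finset.range (K + 1), c k) (hCpos : 0 < C) :
    (embedVec (d := Fin d) (Pi.single (fun _ : Fin K => (⟨0, ha⟩ : Fin a)) 1))ᴴ *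
        ((embedVec (d := (Fin K → Fin a) × Fin d) (unaryState K c C))ᴴ *
          (List.ofFn fun i : Fin K => taylorStep K a d W i).prod *
          embedVec (d := (Fin K → Fin a) × Fin d) (unaryState K c C)) *
        embedVec (d := Fin d) (Pi.single (fun _ : Fin K => (⟨0, ha⟩ : Fin a)) 1) =
      ((C : ℂ))⁻¹ •
        ∑ k ∈ Finset.range (K + 1), ((c k : ℂ) * (-Complex.I) ^ k) • M ^ k := by
  classical
  have hMW : ∀ x y : Fin d, M x y = W (⟨0, ha⟩, x) (⟨0, ha⟩, y) := by
    intro x y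
    rw [← hM, compress_apply]
    simp [Pi.single_apply, apply_ite (starRingEnd ℂ)]
  ext x y
  rw [compress_apply]
  simp only [Pi.single_apply, apply_ite (starRingEnd ℂ), _root_.map_one, map_zero, ite_mul,
    one_mul, zero_mul, mul_ite, mul_one, mul_zero, Finset.sum_ite_eq', Finset.mem_univ, if_true,
    Finset.sum_ite_eq]
  rw [List.ofFn_eq_map, compress_apply]
  have hP : ∀ s s' : Fin K → Bool,
      ((List.finRange K).map (taylorStep K a d W)).prod
          (s, ((fun _ : Fin K => (⟨0, ha⟩ : Fin a)), x)) (s', ((fun _ : Fin K => (⟨0, ha⟩ : Fin a)), y))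
        = (if s = s' then (1:ℂ) else 0) *
            ((List.finRange K).map (blk W s (fun _ => ⟨0, ha⟩) (fun _ => ⟨0, ha⟩))).prod x y := by
    intro s s'
    rw [prod_entry W _ (List.nodup_finRange K)]
    simp [List.mem_finRange]
  rw [Finset.sum_congr rfl (fun s _ => Finset.sum_congr rfl (fun s' _ => by rw [hP s s']))]
  have hb : ∀ s : Fin K → Bool, unaryState K c C s
      = ∑ k ∈ Finset.range (K+1), ((Real.sqrt (c k) / Real.sqrt C : ℝ) : ℂ) *
          (if s = (fun i : Fin K => decide ((i:ℕ) < k)) then 1 else 0) := by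
    intro s
    simp [unaryState, Finset.sum_apply, Pi.single_apply]
  have main2 : ∀ Q : (Fin K → Bool) → ℂ,
      (∑ s : Fin K → Bool, ∑ s' : Fin K → Bool,
        (starRingEnd ℂ) (unaryState K c C s) * ((if s = s' then (1:ℂ) else 0) * Q s) *
          unaryState K c C s')
      = ∑ k ∈ Finset.range (K + 1), ((c k / C : ℝ) : ℂ) *
          Q (fun i : Fin K => decide ((i:ℕ) < k)) := by
    intro Q
    have h1 : ∀ s : Fin K → Bool, (∑ s' : Fin K → Bool,
        (starRingEnd ℂ) (unaryState K c C s) * ((if s = s' then (1:ℂ) else 0) * Q s) *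
          unaryState K c C s')
        = (starRingEnd ℂ) (unaryState K c C s) * Q s * unaryState K c C s := by
      intro s
      rw [Finset.sum_congr rfl (fun s' (_ : s' ∈ Finset.univ) => show _ = if s = s' then
          (starRingEnd ℂ) (unaryState K c C s) * Q s * unaryState K c C s' else 0 from by
        by_cases h : s = s'
        · rw [if_pos h, if_pos h]; ring
        · rw [if_neg h, if_neg h]; ring)]
      rw [Finset.sum_ite_eq Finset.univ s]
      simp
    rw [Finset.sum_congr rfl fun s _ => h1 s]
    have hconj : ∀ s, (starRingEnd ℂ) (unaryState K c C s) = unaryState K c C s := by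
      intro s
      rw [hb, map_sum]
      refine Finset.sum_congr rfl fun k _ => ?_
      simp [apply_ite (starRingEnd ℂ), Complex.conj_ofReal]
    rw [Finset.sum_congr rfl fun s (_ : s ∈ Finset.univ) => by rw [hconj s, hb s]]
    simp only [Finset.sum_mul, Finset.mul_sum]
    rw [Finset.sum_comm]
    rw [Finset.sum_congr rfl fun l (_ : l ∈ Finset.range (K+1)) => Finset.sum_comm]
    have hcol : ∀ (k l : ℕ),
        (∑ s : Fin K → Bool,
          (((Real.sqrt (c k)/Real.sqrt C : ℝ):ℂ) *
              if s = (fun i : Fin K => decide ((i:ℕ) < k)) then 1 else 0) * Q s *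
            (((Real.sqrt (c l)/Real.sqrt C : ℝ):ℂ) *
              if s = (fun i : Fin K => decide ((i:ℕ) < l)) then 1 else 0))
        = ((Real.sqrt (c k)/Real.sqrt C : ℝ):ℂ) * Q (fun i : Fin K => decide ((i:ℕ) < k)) *
            (((Real.sqrt (c l)/Real.sqrt C : ℝ):ℂ) *
              if (fun i : Fin K => decide ((i:ℕ) < k)) = (fun i : Fin K => decide ((i:ℕ) < l))
                then 1 else 0) := by
      intro k l
      rw [Finset.sum_congr rfl (fun s (_ : s ∈ Finset.univ) =>
        show _ = if s = (fun i : Fin K => decide ((i:ℕ) < k)) then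
            ((Real.sqrt (c k)/Real.sqrt C : ℝ):ℂ) * Q s *
              (((Real.sqrt (c l)/Real.sqrt C : ℝ):ℂ) *
                if s = (fun i : Fin K => decide ((i:ℕ) < l)) then 1 else 0)
          else 0 from by
        by_cases h : s = (fun i : Fin K => decide ((i:ℕ) < k))
        · rw [if_pos h, if_pos h]; ring
        · rw [if_neg h, if_neg h]; ring)]
      rw [Finset.sum_ite_eq' Finset.univ]
      simp
    rw [Finset.sum_congr rfl fun l (_ : l ∈ Finset.range (K+1)) =>
      Finset.sum_congr rfl fun k (_ : k ∈ Finset.range (K+1)) => hcol k l]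
    rw [Finset.sum_comm]
    refine Finset.sum_congr rfl fun k hk => ?_
    have hkK : k ≤ K := Nat.lt_succ_iff.mp (Finset.mem_range.mp hk)
    rw [Finset.sum_eq_single k]
    · rw [if_pos rfl]
      rw [show ((Real.sqrt (c k)/Real.sqrt C : ℝ):ℂ) * Q (fun i : Fin K => decide ((i:ℕ) < k)) *
          (((Real.sqrt (c k)/Real.sqrt C : ℝ):ℂ) * 1)
          = (((Real.sqrt (c k)/Real.sqrt C : ℝ):ℂ) * ((Real.sqrt (c k)/Real.sqrt C : ℝ):ℂ)) *
            Q (fun i : Fin K => decide ((i:ℕ) < k)) from by ring]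
      congr 1
      rw [← Complex.ofReal_mul]
      congr 1
      rw [div_mul_div_comm, Real.mul_self_sqrt (hc k hkK), Real.mul_self_sqrt hCpos.le]
    · intro l hl hlk
      have hlK : l ≤ K := Nat.lt_succ_iff.mp (Finset.mem_range.mp hl)
      rw [if_neg (fun h => hlk (unary_inj hkK hlK h).symm)]
      ring
    · intro h
      exact absurd hk h
  rw [main2 fun s => ((List.map (blk W s (fun _ => (⟨0, ha⟩ : Fin a)) fun _ => (⟨0, ha⟩ : Fin a))
    (List.finRange K)).prod x y)]
  have hQ : ∀ k, k ≤ K →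
      (List.map (blk W (fun i : Fin K => decide ((i:ℕ) < k)) (fun _ => (⟨0, ha⟩ : Fin a))
          fun _ => (⟨0, ha⟩ : Fin a)) (List.finRange K)).prod
        = (-Complex.I)^k • M ^ k := by
    intro k hk
    have hmap : (List.map (blk W (fun i : Fin K => decide ((i:ℕ) < k)) (fun _ => (⟨0, ha⟩ : Fin a))
          fun _ => (⟨0, ha⟩ : Fin a)) (List.finRange K))
        = (List.finRange K).map (fun i : Fin K => if (i:ℕ) < k then ((-Complex.I) • M) else 1) := by
      refine List.map_congr_left fun i _ => ?_
      by_cases hik : (i:ℕ) < k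
      · rw [if_pos hik]
        simp only [blk, hik, decide_true, if_true]
        congr 1
        ext x' y'
        exact (hMW x' y').symm
      · rw [if_neg hik]
        simp [blk, hik]
    rw [hmap, prod_if_lt ((-Complex.I) • M) K k hk, smul_pow]
  rw [Finset.sum_congr rfl fun k hk => by
    rw [hQ k (Nat.lt_succ_iff.mp (Finset.mem_range.mp hk))]]
  simp only [Matrix.smul_apply, Matrix.sum_apply, smul_eq_mul, Finset.mul_sum]
  refine Finset.sum_congr rfl fun k _ => ?_
  rw [Complex.ofReal_div]
  rw [div_eq_mul_inv]
  ring
end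

section
/- Let Γ ≥ 0, let ℂ^{d_0}, …, ℂ^{d_Γ} be finite-dimensional spaces with d_γ ≥ 1, let R_γ = 2E_{0,0} − I on ℂ^{d_γ}, and for φ ∈ [0, π/2] let R = I − (1 − e^{−iφ}) (E_{0,0} ⊗ ⋯ ⊗ E_{0,0}) on ℂ^{d_0} ⊗ ⋯ ⊗ ℂ^{d_Γ}. Introduce ancilla qubits: one control qubit with prepared state u = (|0⟩ + √(2 sin(φ/2)) |1⟩)/√(1 + 2 sin(φ/2)), and Γ+1 qubits each with prepared state |+⟩ = (|0⟩+|1⟩)/√2. Let U_φ = |0⟩⟨0| + e^{i(3π/2 − φ/2)} |1⟩⟨1| act on the control qubit (tensored with identity elsewhere), and let select(U_R) = |0⟩⟨0|_{c} ⊗ I + |1⟩⟨1|_{c} ⊗ ⨂_{γ=0}^{Γ} (|0⟩⟨0|_{γ} ⊗ I_{d_γ} + |1⟩⟨1|_{γ} ⊗ R_γ), where the subscript c refers to the control qubit and subscript γ to the γ-th ancilla qubit paired with ℂ^{d_γ}. Then ((u ⊗ |+⟩^{⊗(Γ+1)})† ⊗ I) · select(U_R) · U_φ · ((u ⊗ |+⟩^{⊗(Γ+1)})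 ⊗ I) = R/(1 + 2 sin(φ/2)); that is, the distributed reflection R is block-encoded with normalization 1 + 2 sin(φ/2). -/
open Matrix Kronecker

/-- The distributed reflection `R = I − (1 − e^{−iφ}) (E_{0,0} ⊗ ⋯ ⊗ E_{0,0})` on
`ℂ^{d_0} ⊗ ⋯ ⊗ ℂ^{d_Γ}`. -/
noncomputable def dRefl (Γ : ℕ) (d : Fin (Γ + 1) → ℕ) (hd : ∀ γ, 0 < d γ) (φ : ℝ) :
    Matrix (∀ γ, Fin (d γ)) (∀ γ, Fin (d γ)) ℂ :=
  1 - (1 - Complex.exp (-Complex.I * (φ : ℂ))) •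
    Matrix.single (fun γ => (⟨0, hd γ⟩ : Fin (d γ)))
      (fun γ => (⟨0, hd γ⟩ : Fin (d γ))) (1 : ℂ)

/-- The local reflection `R_γ = 2E_{0,0} − I` on `ℂ^{d_γ}`. -/
def locRefl (Γ : ℕ) (d : Fin (Γ + 1) → ℕ) (hd : ∀ γ, 0 < d γ) (γ : Fin (Γ + 1)) :
    Matrix (Fin (d γ)) (Fin (d γ)) ℂ :=
  (2 : ℂ) • Matrix.single (⟨0, hd γ⟩ : Fin (d γ)) (⟨0, hd γ⟩ : Fin (d γ)) 1 - 1

/-- `⨂_{γ=0}^{Γ} (|0⟩⟨0|_γ ⊗ I_{d_γ} + |1⟩⟨1|_γ ⊗ R_γ)`, the locally controlled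
reflections on the ancilla qubits paired with the node spaces. -/
noncomputable def ctrlLocRefl (Γ : ℕ) (d : Fin (Γ + 1) → ℕ) (hd : ∀ γ, 0 < d γ) :
    Matrix ((Fin (Γ + 1) → Bool) × (∀ γ, Fin (d γ)))
      ((Fin (Γ + 1) → Bool) × (∀ γ, Fin (d γ))) ℂ :=
  Matrix.of fun p q =>
    ∏ γ : Fin (Γ + 1),
      ((if p.1 γ = q.1 γ then (1 : ℂ) else 0) *
        (if p.1 γ then locRefl Γ d hd γ (p.2 γ) (q.2 γ)
          else if p.2 γ = q.2 γ then 1 else 0))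

/-- `select(U_R) = |0⟩⟨0|_c ⊗ I + |1⟩⟨1|_c ⊗ ⨂_γ (|0⟩⟨0|_γ ⊗ I_{d_γ} + |1⟩⟨1|_γ ⊗ R_γ)`. -/
noncomputable def dReflSelect (Γ : ℕ) (d : Fin (Γ + 1) → ℕ) (hd : ∀ γ, 0 < d γ) :
    Matrix (Bool × ((Fin (Γ + 1) → Bool) × (∀ γ, Fin (d γ))))
      (Bool × ((Fin (Γ + 1) → Bool) × (∀ γ, Fin (d γ)))) ℂ :=
  (Matrix.single false false (1 : ℂ)) ⊗ₖ
      (1 : Matrix ((Fin (Γ + 1) → Bool) × (∀ γ, Fin (d γ)))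
        ((Fin (Γ + 1) → Bool) × (∀ γ, Fin (d γ))) ℂ) +
    (Matrix.single true true (1 : ℂ)) ⊗ₖ ctrlLocRefl Γ d hd

/-- The phase gate `U_φ = |0⟩⟨0| + e^{i(3π/2 − φ/2)}|1⟩⟨1|` on the control qubit,
tensored with the identity elsewhere. -/
noncomputable def phaseGate (Γ : ℕ) (d : Fin (Γ + 1) → ℕ) (φ : ℝ) :
    Matrix (Bool × ((Fin (Γ + 1) → Bool) × (∀ γ, Fin (d γ))))
      (Bool × ((Fin (Γ + 1) → Bool) × (∀ γ, Fin (d γ)))) ℂ :=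
  (Matrix.of fun c c' : Bool =>
      if c = c' then
        (if c then Complex.exp (Complex.I * ((3 * Real.pi / 2 - φ / 2 : ℝ) : ℂ)) else 1)
      else 0) ⊗ₖ
    (1 : Matrix ((Fin (Γ + 1) → Bool) × (∀ γ, Fin (d γ)))
      ((Fin (Γ + 1) → Bool) × (∀ γ, Fin (d γ))) ℂ)

/-- The prepared control-qubit state `u = (|0⟩ + √(2 sin(φ/2)) |1⟩)/√(1 + 2 sin(φ/2))`. -/
noncomputable def ctrlQubitState (φ : ℝ) : Bool → ℂ :=
  fun c => if c then
      ((Real.sqrt (2 * Real.sin (φ / 2)) / Real.sqrt (1 + 2 * Real.sin (φ / 2)) : ℝ) : ℂ)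
    else (((Real.sqrt (1 + 2 * Real.sin (φ / 2)))⁻¹ : ℝ) : ℂ)

/-- The state `|+⟩^{⊗(Γ+1)}` on the `Γ+1` ancilla qubits. -/
noncomputable def plusState (Γ : ℕ) : (Fin (Γ + 1) → Bool) → ℂ :=
  fun _ => (((Real.sqrt 2)⁻¹ ^ (Γ + 1) : ℝ) : ℂ)

set_option maxHeartbeats 1000000

lemma compress {m d : Type*} [Fintype m] [Fintype d] [DecidableEq d]
    (v : m → ℂ) (M : Matrix (m × d) (m × d) ℂ) (x y : d) :
    (((embedVec (d := d) v)ᴴ * M * embedVec (d := d) v) : Matrix d d ℂ) x y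
      = ∑ s : m, ∑ t : m, star (v s) * M (s, x) (t, y) * v t := by
  simp only [Matrix.mul_apply, Matrix.conjTranspose_apply, embedVec, Matrix.of_apply,
    Fintype.sum_prod_type, star_mul', mul_ite, ite_mul, mul_zero, zero_mul, mul_one, one_mul,
    star_one, star_zero, Finset.sum_ite_eq, Finset.sum_ite_eq', Finset.mem_univ, if_true,
    Finset.sum_mul, Finset.mul_sum]
  rw [Finset.sum_comm]
  apply Finset.sum_congr rfl; intro s _
  apply Finset.sum_congr rfl; intro t _
  simp [apply_ite (star : ℂ → ℂ)]

lemma phaseGate_eq (Γ : ℕ) (d : Fin (Γ + 1) → ℕ) (φ : ℝ) :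
    phaseGate Γ d φ = Matrix.diagonal (fun p =>
      if p.1 then Complex.exp (Complex.I * ((3 * Real.pi / 2 - φ / 2 : ℝ) : ℂ)) else 1) := by
  ext ⟨c, X⟩ ⟨c', Y⟩
  simp only [phaseGate, Matrix.kroneckerMap_apply, Matrix.of_apply, Matrix.diagonal_apply,
    Matrix.one_apply, Prod.mk.injEq]
  by_cases h1 : c = c' <;> by_cases h2 : X = Y <;> simp [h1, h2]

lemma key (φ : ℝ) :
    2 * Complex.sin ((φ:ℂ)/2) *
      Complex.exp (Complex.I * (3 * (Real.pi:ℂ) / 2 - (φ:ℂ)/2)) =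
    Complex.exp (-(Complex.I * (φ : ℂ))) - 1 := by
  have h1 : Complex.I * (3 * (Real.pi:ℂ) / 2 - (φ:ℂ)/2)
      = (↑Real.pi * Complex.I + (↑Real.pi / 2) * Complex.I) + (-((φ:ℂ)/2) * Complex.I) := by
    ring
  rw [h1, Complex.exp_add, Complex.exp_add, Complex.exp_pi_mul_I, Complex.exp_mul_I,
    Complex.cos_pi_div_two, Complex.sin_pi_div_two]
  rw [Complex.sin,
    show -(Complex.I * (φ:ℂ)) = (-((φ:ℂ)/2)*Complex.I) + (-((φ:ℂ)/2)*Complex.I) by ring,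
    Complex.exp_add]
  have h3 : Complex.exp ((φ:ℂ)/2 * Complex.I) * Complex.exp (-((φ:ℂ)/2) * Complex.I) = 1 := by
    rw [← Complex.exp_add]; ring_nf; exact Complex.exp_zero
  have hI : Complex.I ^ 2 = -1 := Complex.I_sq
  linear_combination (-(1:ℂ)) * h3 +
    (Complex.exp (-((φ:ℂ)/2)*Complex.I) *
      (Complex.exp ((φ:ℂ)/2*Complex.I) - Complex.exp (-((φ:ℂ)/2)*Complex.I))) * hI

lemma inner_apply (Γ : ℕ) (d : Fin (Γ + 1) → ℕ) (hd : ∀ γ, 0 < d γ) (φ : ℝ)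
    (hs : 0 ≤ Real.sin (φ / 2))
    (X Y : (Fin (Γ + 1) → Bool) × (∀ γ, Fin (d γ))) :
    (((embedVec (d := (Fin (Γ + 1) → Bool) × (∀ γ, Fin (d γ))) (ctrlQubitState φ))ᴴ *
        (dReflSelect Γ d hd * phaseGate Γ d φ) *
          embedVec (d := (Fin (Γ + 1) → Bool) × (∀ γ, Fin (d γ))) (ctrlQubitState φ)) :
          Matrix ((Fin (Γ + 1) → Bool) × (∀ γ, Fin (d γ))) _ ℂ) X Y
      = (((1 + 2 * Real.sin (φ / 2) : ℝ) : ℂ))⁻¹ *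
          ((if X = Y then 1 else 0) +
            (Complex.exp (-(Complex.I * (φ : ℂ))) - 1) * ctrlLocRefl Γ d hd X Y) := by
  have hN : (0:ℝ) ≤ 1 + 2 * Real.sin (φ / 2) := by linarith
  rw [compress, phaseGate_eq]
  simp [Matrix.mul_diagonal, Fintype.sum_bool, dReflSelect, Matrix.add_apply,
    Matrix.kroneckerMap_apply, Matrix.single, Matrix.of_apply, Matrix.one_apply,
    ctrlQubitState, Complex.conj_ofReal]
  have hsc : Complex.sin ((φ:ℂ)/2) = ((Real.sin (φ / 2) : ℝ) : ℂ) := by push_cast; ring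
  have hNc : ((1:ℂ) + 2 * Complex.sin ((φ:ℂ)/2)) = ((1 + 2 * Real.sin (φ / 2) : ℝ) : ℂ) := by
    push_cast; ring
  have hb : (((Real.sqrt (1 + 2 * Real.sin (φ / 2)) : ℝ) : ℂ))⁻¹ *
      (((Real.sqrt (1 + 2 * Real.sin (φ / 2)) : ℝ) : ℂ))⁻¹
      = (((1 + 2 * Real.sin (φ / 2) : ℝ) : ℂ))⁻¹ := by
    rw [← Complex.ofReal_inv, ← Complex.ofReal_inv, ← Complex.ofReal_mul, ← mul_inv,
      Real.mul_self_sqrt hN, Complex.ofReal_inv]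
  have hr : (Real.sqrt 2 * Real.sqrt (Real.sin (φ / 2)) / Real.sqrt (1 + 2 * Real.sin (φ / 2))) *
      (Real.sqrt 2 * Real.sqrt (Real.sin (φ / 2)) / Real.sqrt (1 + 2 * Real.sin (φ / 2)))
      = 2 * Real.sin (φ / 2) * (1 + 2 * Real.sin (φ / 2))⁻¹ := by
    rw [div_mul_div_comm,
      show (Real.sqrt 2 * Real.sqrt (Real.sin (φ / 2))) *
          (Real.sqrt 2 * Real.sqrt (Real.sin (φ / 2)))
        = (Real.sqrt 2 * Real.sqrt 2) * (Real.sqrt (Real.sin (φ / 2)) *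
            Real.sqrt (Real.sin (φ / 2))) by ring,
      Real.mul_self_sqrt (by norm_num), Real.mul_self_sqrt hs, Real.mul_self_sqrt hN,
      div_eq_mul_inv]
  have hA : ((Real.sqrt 2 : ℝ) : ℂ) * ((Real.sqrt (Real.sin (φ / 2)) : ℝ) : ℂ) /
        ((Real.sqrt (1 + 2 * Real.sin (φ / 2)) : ℝ) : ℂ) *
      (((Real.sqrt 2 : ℝ) : ℂ) * ((Real.sqrt (Real.sin (φ / 2)) : ℝ) : ℂ) /
        ((Real.sqrt (1 + 2 * Real.sin (φ / 2)) : ℝ) : ℂ))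
      = 2 * ((Real.sin (φ / 2) : ℝ) : ℂ) * (((1 + 2 * Real.sin (φ / 2) : ℝ) : ℂ))⁻¹ := by
    rw [show ((Real.sqrt 2 : ℝ) : ℂ) * ((Real.sqrt (Real.sin (φ / 2)) : ℝ) : ℂ) /
          ((Real.sqrt (1 + 2 * Real.sin (φ / 2)) : ℝ) : ℂ)
        = ((Real.sqrt 2 * Real.sqrt (Real.sin (φ / 2)) /
            Real.sqrt (1 + 2 * Real.sin (φ / 2)) : ℝ) : ℂ) by push_cast; ring,
      ← Complex.ofReal_mul, hr]
    push_cast; ring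
  rw [← key φ, hNc, hsc]
  by_cases hXY : X = Y
  · simp only [hXY, if_true]
    linear_combination (ctrlLocRefl Γ d hd Y Y *
        Complex.exp (Complex.I * (3 * (Real.pi:ℂ) / 2 - (φ:ℂ)/2))) * hA + hb
  · simp only [hXY, if_false]
    linear_combination (ctrlLocRefl Γ d hd X Y *
        Complex.exp (Complex.I * (3 * (Real.pi:ℂ) / 2 - (φ:ℂ)/2))) * hA

lemma ctrl_apply (Γ : ℕ) (d : Fin (Γ + 1) → ℕ) (hd : ∀ γ, 0 < d γ)
    (s t : Fin (Γ + 1) → Bool) (a b : ∀ γ, Fin (d γ)) :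
    ctrlLocRefl Γ d hd (s, a) (t, b)
      = (if s = t then (1:ℂ) else 0) *
        ∏ γ, (if s γ then locRefl Γ d hd γ (a γ) (b γ)
          else if a γ = b γ then (1:ℂ) else 0) := by
  simp only [ctrlLocRefl, Matrix.of_apply]
  rw [Finset.prod_mul_distrib]
  congr 1
  by_cases h : s = t
  · simp [h]
  · obtain ⟨γ, hγ⟩ : ∃ γ, s γ ≠ t γ := by
      by_contra hc; push_neg at hc; exact h (funext hc)
    rw [if_neg h]
    exact Finset.prod_eq_zero (Finset.mem_univ γ) (by simp [hγ])

lemma G_sum (Γ : ℕ) (d : Fin (Γ + 1) → ℕ) (hd : ∀ γ, 0 < d γ)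
    (a b : ∀ γ, Fin (d γ)) (γ : Fin (Γ + 1)) :
    (if (a γ = b γ) then (1:ℂ) else 0) + locRefl Γ d hd γ (a γ) (b γ)
      = 2 * (if a γ = (⟨0, hd γ⟩ : Fin (d γ)) ∧ b γ = (⟨0, hd γ⟩ : Fin (d γ)) then 1 else 0) := by
  simp only [locRefl, Matrix.sub_apply, Matrix.smul_apply, Matrix.one_apply,
    Matrix.single, Matrix.of_apply, smul_eq_mul, mul_one]
  ring_nf
  simp [eq_comm]

lemma prod_sum_eq (Γ : ℕ) (d : Fin (Γ + 1) → ℕ) (hd : ∀ γ, 0 < d γ)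
    (a b : ∀ γ, Fin (d γ)) :
    (∑ s : Fin (Γ + 1) → Bool,
        ∏ γ, (if s γ then locRefl Γ d hd γ (a γ) (b γ)
          else if a γ = b γ then (1:ℂ) else 0))
      = 2 ^ (Γ + 1) *
        (if (a = fun γ => (⟨0, hd γ⟩ : Fin (d γ))) ∧ (b = fun γ => (⟨0, hd γ⟩ : Fin (d γ)))
          then 1 else 0) := by
  have hps := Finset.prod_univ_sum (fun _ : Fin (Γ + 1) => (Finset.univ : Finset Bool))
    (fun γ x => if x then locRefl Γ d hd γ (a γ) (b γ) else if a γ = b γ then (1:ℂ) else 0)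
  rw [Fintype.piFinset_univ] at hps
  rw [← hps]
  have hγ : ∀ γ : Fin (Γ + 1),
      (∑ x : Bool, if x then locRefl Γ d hd γ (a γ) (b γ)
          else if a γ = b γ then (1:ℂ) else 0)
        = 2 * (if a γ = (⟨0, hd γ⟩ : Fin (d γ)) ∧ b γ = (⟨0, hd γ⟩ : Fin (d γ))
            then 1 else 0) := by
    intro γ
    rw [Fintype.sum_bool, if_pos rfl, if_neg (by simp), add_comm]
    exact G_sum Γ d hd a b γ
  simp only [hγ]
  rw [Finset.prod_mul_distrib, Finset.prod_const, Finset.card_univ, Fintype.card_fin]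
  congr 1
  by_cases ha : (a = fun γ => (⟨0, hd γ⟩ : Fin (d γ))) ∧ (b = fun γ => (⟨0, hd γ⟩ : Fin (d γ)))
  · obtain ⟨h1, h2⟩ := ha
    subst h1; subst h2
    simp
  · rw [if_neg ha]
    have hex : ∃ γ, ¬(a γ = (⟨0, hd γ⟩ : Fin (d γ)) ∧ b γ = (⟨0, hd γ⟩ : Fin (d γ))) := by
      by_contra hc; push_neg at hc
      exact ha ⟨funext fun γ => (hc γ).1, funext fun γ => (hc γ).2⟩
    obtain ⟨γ, hγ'⟩ := hex
    exact Finset.prod_eq_zero (Finset.mem_univ γ) (if_neg hγ')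

lemma outer_sum (Γ : ℕ) (d : Fin (Γ + 1) → ℕ) (hd : ∀ γ, 0 < d γ)
    (a b : ∀ γ, Fin (d γ)) (A E : ℂ) :
    (∑ s : Fin (Γ + 1) → Bool, ∑ t : Fin (Γ + 1) → Bool,
      star (plusState Γ s) *
        (A * ((if ((s, a) : (Fin (Γ + 1) → Bool) × (∀ γ, Fin (d γ))) = (t, b) then (1:ℂ) else 0)
            + E * ctrlLocRefl Γ d hd (s, a) (t, b))) * plusState Γ t)
      = A * ((if a = b then 1 else 0) +
          E * (if (a = fun γ => (⟨0, hd γ⟩ : Fin (d γ))) ∧ (b = fun γ => (⟨0, hd γ⟩ : Fin (d γ)))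
            then 1 else 0)) := by
  have hκ2 : ((((Real.sqrt 2)⁻¹ ^ (Γ + 1) : ℝ) : ℂ)) * ((((Real.sqrt 2)⁻¹ ^ (Γ + 1) : ℝ) : ℂ)) *
      (2 : ℂ) ^ (Γ + 1) = 1 := by
    rw [show ((2:ℂ) ^ (Γ + 1)) = (((2:ℝ) ^ (Γ + 1) : ℝ) : ℂ) by push_cast; ring,
      ← Complex.ofReal_mul, ← Complex.ofReal_mul, ← Complex.ofReal_one]
    congr 1
    rw [← mul_pow, ← mul_pow, ← mul_inv, Real.mul_self_sqrt (by norm_num : (0:ℝ) ≤ 2)]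
    norm_num
  have hstep : ∀ s : Fin (Γ + 1) → Bool,
      (∑ t : Fin (Γ + 1) → Bool,
        star (plusState Γ s) *
          (A * ((if ((s, a) : (Fin (Γ + 1) → Bool) × (∀ γ, Fin (d γ))) = (t, b) then (1:ℂ) else 0)
              + E * ctrlLocRefl Γ d hd (s, a) (t, b))) * plusState Γ t)
        = ((((Real.sqrt 2)⁻¹ ^ (Γ + 1) : ℝ) : ℂ)) * ((((Real.sqrt 2)⁻¹ ^ (Γ + 1) : ℝ) : ℂ)) *
            (A * ((if a = b then 1 else 0) +
              E * ∏ γ, (if s γ then locRefl Γ d hd γ (a γ) (b γ)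
                else if a γ = b γ then (1:ℂ) else 0))) := by
    intro s
    simp only [plusState, Complex.star_def, Complex.conj_ofReal, ctrl_apply, Prod.mk.injEq]
    rw [Finset.sum_eq_single s]
    · simp only [if_true, eq_self_iff_true, true_and]
      ring
    · intro t _ hts
      simp [Ne.symm hts]
    · intro h; exact absurd (Finset.mem_univ s) h
  simp only [hstep]
  have hbody : ∀ s : Fin (Γ + 1) → Bool,
      ((((Real.sqrt 2)⁻¹ ^ (Γ + 1) : ℝ) : ℂ)) * ((((Real.sqrt 2)⁻¹ ^ (Γ + 1) : ℝ) : ℂ)) *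
          (A * ((if a = b then 1 else 0) +
            E * ∏ γ, (if s γ then locRefl Γ d hd γ (a γ) (b γ)
              else if a γ = b γ then (1:ℂ) else 0)))
        = ((((Real.sqrt 2)⁻¹ ^ (Γ + 1) : ℝ) : ℂ)) * ((((Real.sqrt 2)⁻¹ ^ (Γ + 1) : ℝ) : ℂ)) *
            A * (if a = b then 1 else 0) +
          ((((Real.sqrt 2)⁻¹ ^ (Γ + 1) : ℝ) : ℂ)) * ((((Real.sqrt 2)⁻¹ ^ (Γ + 1) : ℝ) : ℂ)) *
            A * E * ∏ γ, (if s γ then locRefl Γ d hd γ (a γ) (b γ)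
              else if a γ = b γ then (1:ℂ) else 0) := fun s => by ring
  simp only [hbody]
  rw [Finset.sum_add_distrib, Finset.sum_const, ← Finset.mul_sum, prod_sum_eq,
    Finset.card_univ]
  have hcard : Fintype.card (Fin (Γ + 1) → Bool) = 2 ^ (Γ + 1) := by
    simp [Fintype.card_fun]
  rw [hcard, nsmul_eq_mul, Nat.cast_pow, Nat.cast_ofNat]
  linear_combination (A * (if a = b then (1:ℂ) else 0) +
    A * E * (if (a = fun γ => (⟨0, hd γ⟩ : Fin (d γ))) ∧
      (b = fun γ => (⟨0, hd γ⟩ : Fin (d γ))) then 1 else 0)) * hκ2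

/-- Distributed reflection via nested LCU: compressing `select(U_R) · U_φ` by the
prepared ancilla state `u ⊗ |+⟩^{⊗(Γ+1)}` block-encodes the distributed reflection `R`
with normalization `1 + 2 sin(φ/2)`. -/
theorem distributed_reflection (Γ : ℕ) (d : Fin (Γ + 1) → ℕ) (hd : ∀ γ, 0 < d γ)
    (φ : ℝ) (hφ0 : 0 ≤ φ) (hφ : φ ≤ Real.pi / 2) :
    (embedVec (d := ∀ γ, Fin (d γ)) (plusState Γ))ᴴ *
        ((embedVec (d := (Fin (Γ + 1) → Bool) × (∀ γ, Fin (d γ))) (ctrlQubitState φ))ᴴ *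
          (dReflSelect Γ d hd * phaseGate Γ d φ) *
          embedVec (d := (Fin (Γ + 1) → Bool) × (∀ γ, Fin (d γ))) (ctrlQubitState φ)) *
        embedVec (d := ∀ γ, Fin (d γ)) (plusState Γ) =
      (((1 + 2 * Real.sin (φ / 2) : ℝ) : ℂ))⁻¹ • dRefl Γ d hd φ := by
  have hs : 0 ≤ Real.sin (φ / 2) :=
    Real.sin_nonneg_of_nonneg_of_le_pi (by linarith) (by linarith [Real.pi_pos])
  ext a b
  rw [compress]
  simp only [inner_apply Γ d hd φ hs]
  rw [outer_sum]
  simp only [dRefl, Matrix.smul_apply, Matrix.sub_apply, Matrix.one_apply,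
    Matrix.single, Matrix.of_apply, smul_eq_mul]
  have h1 : Complex.exp (-Complex.I * (φ:ℂ)) = Complex.exp (-(Complex.I * (φ:ℂ))) := by
    rw [neg_mul]
  have h2 : (if (a = fun γ => (⟨0, hd γ⟩ : Fin (d γ))) ∧ (b = fun γ => (⟨0, hd γ⟩ : Fin (d γ)))
        then (1:ℂ) else 0)
      = (if ((fun γ => (⟨0, hd γ⟩ : Fin (d γ))) = a) ∧ ((fun γ => (⟨0, hd γ⟩ : Fin (d γ))) = b)
        then (1:ℂ) else 0) := by
    simp [eq_comm]
  rw [h2]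
  rw [h1]
  ring
end

section
/- Let A and B be Hermitian d×d complex matrices, t ≥ 0 a real number, and r ≥ 1 an integer. Then ‖exp(−it(A+B)) − (exp(−i(t/r)A) · exp(−i(t/r)B))^r‖ ≤ t² ‖AB − BA‖ / (2r), where ‖·‖ is the operator norm. -/
open NormedSpace
local notation "I" => Complex.I

namespace TrotterAux

variable {𝒜 : Type*} [NormedRing 𝒜] [StarRing 𝒜] [CStarRing 𝒜] [NormedAlgebra ℂ 𝒜]
  [CompleteSpace 𝒜] [StarModule ℂ 𝒜] [ContinuousStar 𝒜]

noncomputable local instance : NormedAlgebra ℚ 𝒜 := NormedAlgebra.restrictScalars ℚ ℂ 𝒜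

/-- `E x s = exp(-i s x)`. -/
noncomputable def E (x : 𝒜) (s : ℝ) : 𝒜 := exp ((s : ℂ) • ((-I : ℂ) • x))

set_option linter.unusedSectionVars false

lemma E_deriv (x : 𝒜) (s : ℝ) : HasDerivAt (fun u : ℝ => E x u) (E x s * ((-I : ℂ) • x)) s := by
  have h := (hasDerivAt_exp_smul_const ((-I : ℂ) • x) (s : ℂ)).scomp s
    Complex.ofRealCLM.hasDerivAt
  simpa [E, Function.comp_def] using h

lemma E_neg_deriv (x : 𝒜) (s : ℝ) :
    HasDerivAt (fun u : ℝ => E x (-u)) (-(E x (-s) * ((-I : ℂ) • x))) s := by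
  simpa [Function.comp_def] using (E_deriv x (-s)).scomp s (hasDerivAt_neg s)

lemma E_zero (x : 𝒜) : E x 0 = 1 := by simp [E, NormedSpace.exp_zero]

lemma E_add (x : 𝒜) (s u : ℝ) : E x (s + u) = E x s * E x u := by
  rw [E, E, E, ← exp_add_of_commute (((Commute.refl _).smul_left (s : ℂ)).smul_right (u : ℂ))]
  push_cast
  rw [add_smul]

lemma E_neg_mul_E (x : 𝒜) (s : ℝ) : E x (-s) * E x s = 1 := by
  rw [← E_add, neg_add_cancel, E_zero]

lemma E_mul_E_neg (x : 𝒜) (s : ℝ) : E x s * E x (-s) = 1 := by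
  rw [← E_add, add_neg_cancel, E_zero]

lemma commute_E (x : 𝒜) (s : ℝ) : Commute (E x s) ((-I : ℂ) • x) :=
  ((Commute.refl ((-I : ℂ) • x)).smul_left (s : ℂ)).exp_left

lemma star_E (x : 𝒜) (hx : star x = x) (s : ℝ) : star (E x s) = E x (-s) := by
  rw [E, E, star_exp]
  congr 1
  rw [star_smul, star_smul, hx]
  push_cast
  rw [smul_smul, smul_smul]
  congr 1
  simp [Complex.ext_iff]

lemma norm_E_le_one (h1 : ‖(1 : 𝒜)‖ ≤ 1) (x : 𝒜) (hx : star x = x) (s : ℝ) :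
    ‖E x s‖ ≤ 1 := by
  have h2 : star (E x s) * E x s = 1 := by rw [star_E x hx, E_neg_mul_E]
  have h3 := CStarRing.norm_star_mul_self (x := E x s)
  rw [h2] at h3
  nlinarith [norm_nonneg (E x s)]


lemma smul_comm_eq (a b : 𝒜) :
    ((-I : ℂ) • a) * b - b * ((-I : ℂ) • a) = (-I : ℂ) • (a * b - b * a) := by
  rw [smul_mul_assoc, mul_smul_comm, smul_sub]

lemma norm_smul_negI (y : 𝒜) : ‖(-I : ℂ) • y‖ = ‖y‖ := by
  rw [norm_smul]; simp

lemma comm_grow (h1 : ‖(1 : 𝒜)‖ ≤ 1) (a : 𝒜) (ha : star a = a) (b : 𝒜) {s : ℝ} (hs : 0 ≤ s) :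
    ‖E a s * b - b * E a s‖ ≤ s * ‖a * b - b * a‖ := by
  set K : ℝ → 𝒜 := fun u => E a u * b * E a (-u) with hK
  have hKd : ∀ u : ℝ, HasDerivAt K (E a u * (((-I : ℂ) • a) * b - b * ((-I : ℂ) • a)) * E a (-u)) u := by
    intro u
    have h2 := ((E_deriv a u).mul_const b).mul (E_neg_deriv a u)
    convert h2 using 1
    case e'_8 => rfl
    rw [(commute_E a (-u)).eq]
    simp only [sub_eq_add_neg, mul_add, add_mul, neg_mul, mul_neg, mul_assoc]
  have hbound : ∀ u : ℝ, ‖E a u * (((-I : ℂ) • a) * b - b * ((-I : ℂ) • a)) * E a (-u)‖ ≤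
      ‖a * b - b * a‖ := by
    intro u
    have h5 := norm_E_le_one h1 a ha u
    have h6 := norm_E_le_one h1 a ha (-u)
    have hfst : ‖E a u * (((-I : ℂ) • a) * b - b * ((-I : ℂ) • a))‖ ≤ ‖a * b - b * a‖ := by
      refine (norm_mul_le _ _).trans ?_
      rw [smul_comm_eq, norm_smul_negI]
      calc ‖E a u‖ * ‖a * b - b * a‖ ≤ 1 * ‖a * b - b * a‖ :=
            mul_le_mul_of_nonneg_right h5 (norm_nonneg _)
        _ = ‖a * b - b * a‖ := one_mul _
    refine (norm_mul_le _ _).trans ?_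
    calc ‖E a u * (((-I : ℂ) • a) * b - b * ((-I : ℂ) • a))‖ * ‖E a (-u)‖
        ≤ ‖a * b - b * a‖ * 1 :=
          mul_le_mul hfst h6 (norm_nonneg _) (norm_nonneg _)
      _ = ‖a * b - b * a‖ := mul_one _
  have hmv : ‖K s - K 0‖ ≤ ‖a * b - b * a‖ * ‖s - 0‖ :=
    (convex_Icc (0:ℝ) s).norm_image_sub_le_of_norm_hasDerivWithin_le
      (fun u _ => (hKd u).hasDerivWithinAt) (fun u _ => hbound u)
      (Set.left_mem_Icc.mpr hs) (Set.right_mem_Icc.mpr hs)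
  have hK0 : K 0 = b := by simp [hK, E_zero]
  have h10 : ‖s - (0:ℝ)‖ = s := by rw [sub_zero, Real.norm_eq_abs, abs_of_nonneg hs]
  rw [hK0, h10] at hmv
  have hfactor : E a s * b - b * E a s = (K s - b) * E a s := by
    have h7 : K s * E a s = E a s * b := by
      rw [hK]; simp only [mul_assoc, E_neg_mul_E, mul_one]
    rw [sub_mul, h7]
  rw [hfactor]
  have h9 := norm_E_le_one h1 a ha s
  refine (norm_mul_le _ _).trans ?_
  calc ‖K s - b‖ * ‖E a s‖ ≤ (‖a * b - b * a‖ * s) * 1 :=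
        mul_le_mul hmv h9 (norm_nonneg _) (by positivity)
    _ = s * ‖a * b - b * a‖ := by ring

lemma E_continuous (x : 𝒜) : Continuous (E x) :=
  exp_continuous.comp (Complex.continuous_ofReal.smul continuous_const)

lemma single_step (h1 : ‖(1 : 𝒜)‖ ≤ 1) (a b : 𝒜) (ha : star a = a) (hb : star b = b)
    {τ : ℝ} (hτ : 0 ≤ τ) :
    ‖E (a + b) τ - E a τ * E b τ‖ ≤ τ ^ 2 / 2 * ‖a * b - b * a‖ := by
  have hab : star (a + b) = a + b := by rw [star_add, ha, hb]
  set F : ℝ → 𝒜 := fun u => E (a + b) (-u) * (E a u * E b u) with hF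
  set G : ℝ → 𝒜 :=
    fun u => E (a + b) (-u) * (((-I : ℂ) • (E a u * b - b * E a u)) * E b u) with hG
  have hFd : ∀ u : ℝ, HasDerivAt F (G u) u := by
    intro u
    have h2 := (E_neg_deriv (a + b) u).mul ((E_deriv a u).mul (E_deriv b u))
    convert h2 using 1
    case e'_8 => rfl
    show E (a + b) (-u) * (((-I : ℂ) • (E a u * b - b * E a u)) * E b u) = _
    simp only [Pi.mul_apply]
    have hca : E a u * ((-I : ℂ) • a) = ((-I : ℂ) • a) * E a u := (commute_E a u).eq
    have hcb : E b u * ((-I : ℂ) • b) = ((-I : ℂ) • b) * E b u := (commute_E b u).eq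
    have habm : (-I : ℂ) • (a + b) = (-I : ℂ) • a + (-I : ℂ) • b := smul_add _ _ _
    rw [smul_sub, ← mul_smul_comm, ← smul_mul_assoc, habm, hca, hcb]
    simp only [sub_eq_add_neg, mul_add, add_mul, neg_mul, mul_neg, mul_assoc, neg_add]
    abel
  have hGbound : ∀ u ∈ Set.uIoc (0:ℝ) τ, ‖G u‖ ≤ u * ‖a * b - b * a‖ := by
    intro u hu
    rw [Set.uIoc_of_le hτ] at hu
    have hu0 : 0 ≤ u := le_of_lt hu.1
    have h5 := norm_E_le_one h1 (a + b) hab (-u)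
    have h6 := norm_E_le_one h1 b hb u
    have h7 := comm_grow h1 a ha b hu0
    have hmid : ‖((-I : ℂ) • (E a u * b - b * E a u)) * E b u‖ ≤ u * ‖a * b - b * a‖ := by
      refine (norm_mul_le _ _).trans ?_
      rw [norm_smul_negI]
      calc ‖E a u * b - b * E a u‖ * ‖E b u‖ ≤ (u * ‖a * b - b * a‖) * 1 :=
            mul_le_mul h7 h6 (norm_nonneg _) (by positivity)
        _ = u * ‖a * b - b * a‖ := mul_one _
    rw [hG]
    refine (norm_mul_le _ _).trans ?_
    calc ‖E (a + b) (-u)‖ * ‖((-I : ℂ) • (E a u * b - b * E a u)) * E b u‖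
        ≤ 1 * (u * ‖a * b - b * a‖) :=
          mul_le_mul h5 hmid (norm_nonneg _) zero_le_one
      _ = u * ‖a * b - b * a‖ := one_mul _
  have hGcont : Continuous G := by
    have c1 : Continuous fun u : ℝ => E (a + b) (-u) := (E_continuous (a + b)).comp continuous_neg
    have c2 : Continuous fun u : ℝ => (-I : ℂ) • (E a u * b - b * E a u) :=
      (((E_continuous a).mul continuous_const).sub
        (continuous_const.mul (E_continuous a))).const_smul (-I : ℂ)
    exact c1.mul (c2.mul (E_continuous b))
  have hF0 : F 0 = 1 := by simp [hF, E_zero]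
  have hint : ∫ u in (0:ℝ)..τ, G u = F τ - F 0 :=
    intervalIntegral.integral_eq_sub_of_hasDerivAt (fun u _ => hFd u)
      (hGcont.intervalIntegrable 0 τ)
  have hnorm : ‖F τ - F 0‖ ≤ τ ^ 2 / 2 * ‖a * b - b * a‖ := by
    rw [← hint]
    have hae : ∀ᵐ u ∂(MeasureTheory.volume.restrict (Set.uIoc (0:ℝ) τ)),
        ‖G u‖ ≤ u * ‖a * b - b * a‖ :=
      (MeasureTheory.ae_restrict_mem measurableSet_uIoc).mono fun u hu => hGbound u hu
    have hgi : IntervalIntegrable (fun u : ℝ => u * ‖a * b - b * a‖)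
        MeasureTheory.volume 0 τ :=
      (continuous_id.mul continuous_const).intervalIntegrable 0 τ
    refine (intervalIntegral.norm_integral_le_abs_of_norm_le hae hgi).trans ?_
    rw [intervalIntegral.integral_mul_const, integral_id]
    have he : ((τ:ℝ) ^ 2 - 0 ^ 2) / 2 * ‖a * b - b * a‖ = τ ^ 2 / 2 * ‖a * b - b * a‖ := by
      ring
    rw [he, abs_of_nonneg (by positivity)]
  have h11 : E (a + b) τ * F τ = E a τ * E b τ := by
    rw [hF]
    show E (a + b) τ * (E (a + b) (-τ) * (E a τ * E b τ)) = _
    rw [← mul_assoc, E_mul_E_neg, one_mul]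
  have h12 : E (a + b) τ - E a τ * E b τ = E (a + b) τ * (F 0 - F τ) := by
    rw [mul_sub, h11, hF0, mul_one]
  rw [h12]
  refine (norm_mul_le _ _).trans ?_
  have h13 := norm_E_le_one h1 (a + b) hab τ
  have h14 : ‖F 0 - F τ‖ = ‖F τ - F 0‖ := norm_sub_rev _ _
  calc ‖E (a + b) τ‖ * ‖F 0 - F τ‖ ≤ 1 * (τ ^ 2 / 2 * ‖a * b - b * a‖) := by
        rw [h14]
        exact mul_le_mul h13 hnorm (norm_nonneg _) zero_le_one
    _ = τ ^ 2 / 2 * ‖a * b - b * a‖ := one_mul _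

lemma norm_pow_le_one (h1 : ‖(1 : 𝒜)‖ ≤ 1) {u : 𝒜} (hu : ‖u‖ ≤ 1) (n : ℕ) : ‖u ^ n‖ ≤ 1 := by
  induction n with
  | zero => simpa using h1
  | succ k ih =>
    rw [pow_succ]
    calc ‖u ^ k * u‖ ≤ ‖u ^ k‖ * ‖u‖ := norm_mul_le _ _
      _ ≤ 1 * 1 := mul_le_mul ih hu (norm_nonneg _) zero_le_one
      _ = 1 := one_mul _

lemma telescope (h1 : ‖(1 : 𝒜)‖ ≤ 1) {u v : 𝒜} (hu : ‖u‖ ≤ 1) (hv : ‖v‖ ≤ 1) (n : ℕ) :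
    ‖u ^ n - v ^ n‖ ≤ n * ‖u - v‖ := by
  induction n with
  | zero => simp
  | succ k ih =>
    have hid : u ^ (k + 1) - v ^ (k + 1) = u ^ k * (u - v) + (u ^ k - v ^ k) * v := by
      noncomm_ring
    rw [hid]
    have h2 : ‖u ^ k * (u - v)‖ ≤ ‖u - v‖ := by
      calc ‖u ^ k * (u - v)‖ ≤ ‖u ^ k‖ * ‖u - v‖ := norm_mul_le _ _
        _ ≤ 1 * ‖u - v‖ := mul_le_mul_of_nonneg_right (norm_pow_le_one h1 hu k) (norm_nonneg _)
        _ = ‖u - v‖ := one_mul _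
    have h3 : ‖(u ^ k - v ^ k) * v‖ ≤ k * ‖u - v‖ := by
      calc ‖(u ^ k - v ^ k) * v‖ ≤ ‖u ^ k - v ^ k‖ * ‖v‖ := norm_mul_le _ _
        _ ≤ (k * ‖u - v‖) * 1 := mul_le_mul ih hv (norm_nonneg _) (by positivity)
        _ = k * ‖u - v‖ := mul_one _
    calc ‖u ^ k * (u - v) + (u ^ k - v ^ k) * v‖
        ≤ ‖u ^ k * (u - v)‖ + ‖(u ^ k - v ^ k) * v‖ := norm_add_le _ _
      _ ≤ ‖u - v‖ + k * ‖u - v‖ := add_le_add h2 h3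
      _ = (k + 1 : ℕ) * ‖u - v‖ := by push_cast; ring

lemma E_pow (x : 𝒜) (s : ℝ) (n : ℕ) : E x (n * s) = E x s ^ n := by
  induction n with
  | zero => simpa using E_zero x
  | succ k ih =>
    have : ((k + 1 : ℕ) : ℝ) * s = (k : ℝ) * s + s := by push_cast; ring
    rw [this, E_add, ih, pow_succ]

theorem abstract_trotter (h1 : ‖(1 : 𝒜)‖ ≤ 1) (a b : 𝒜) (ha : star a = a) (hb : star b = b)
    (t : ℝ) (ht : 0 ≤ t) (r : ℕ) (hr : 1 ≤ r) :
    ‖exp ((-I * (t : ℂ)) • (a + b)) -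
        (exp ((-I * ((t / r : ℝ) : ℂ)) • a) * exp ((-I * ((t / r : ℝ) : ℂ)) • b)) ^ r‖ ≤
      t ^ 2 * ‖a * b - b * a‖ / (2 * r) := by
  have hE : ∀ (x : 𝒜) (s : ℝ), exp ((-I * (s : ℂ)) • x) = E x s := by
    intro x s
    rw [E, smul_smul]
    congr 2
    ring
  rw [hE, hE, hE]
  have hrpos : (0:ℝ) < r := by exact_mod_cast Nat.lt_of_lt_of_le Nat.zero_lt_one hr
  have hτ : 0 ≤ t / r := div_nonneg ht hrpos.le
  have hab : star (a + b) = a + b := by rw [star_add, ha, hb]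
  have hsplit : E (a + b) t = E (a + b) (t / r) ^ r := by
    rw [← E_pow]
    congr 1
    field_simp
  have hu : ‖E (a + b) (t / r)‖ ≤ 1 := norm_E_le_one h1 (a + b) hab _
  have hv : ‖E a (t / r) * E b (t / r)‖ ≤ 1 := by
    calc ‖E a (t / r) * E b (t / r)‖ ≤ ‖E a (t / r)‖ * ‖E b (t / r)‖ := norm_mul_le _ _
      _ ≤ 1 * 1 := mul_le_mul (norm_E_le_one h1 a ha _) (norm_E_le_one h1 b hb _)
          (norm_nonneg _) zero_le_one
      _ = 1 := one_mul _
  calc ‖E (a + b) t - (E a (t / r) * E b (t / r)) ^ r‖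
      = ‖(E (a + b) (t / r)) ^ r - (E a (t / r) * E b (t / r)) ^ r‖ := by
        rw [hsplit]
    _ ≤ r * ‖E (a + b) (t / r) - E a (t / r) * E b (t / r)‖ := telescope h1 hu hv r
    _ ≤ r * ((t / r) ^ 2 / 2 * ‖a * b - b * a‖) := by
        exact mul_le_mul_of_nonneg_left (single_step h1 a b ha hb hτ) (Nat.cast_nonneg r)
    _ = t ^ 2 * ‖a * b - b * a‖ / (2 * r) := by
        field_simp

end TrotterAux


open Matrix

/-- The spectral (ℓ²-operator) norm of a complex matrix. -/
noncomputable def l2OpNorm {n : Type*} [Fintype n] [DecidableEq n]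
    (A : Matrix n n ℂ) : ℝ :=
  ‖Matrix.toEuclideanCLM (𝕜 := ℂ) A‖

set_option maxHeartbeats 1000000 in
/-- First-order Trotter product formula error bound with commutator scaling:
`‖exp(−it(A+B)) − (exp(−i(t/r)A)·exp(−i(t/r)B))^r‖ ≤ t² ‖[A,B]‖ / (2r)`. -/
theorem trotter_first_order (d : ℕ) (A B : Matrix (Fin d) (Fin d) ℂ)
    (hA : A.IsHermitian) (hB : B.IsHermitian) (t : ℝ) (ht : 0 ≤ t)
    (r : ℕ) (hr : 1 ≤ r) :
    l2OpNorm
        (NormedSpace.exp ((-Complex.I * (t : ℂ)) • (A + B)) -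
          (NormedSpace.exp ((-Complex.I * ((t / r : ℝ) : ℂ)) • A) *
            NormedSpace.exp ((-Complex.I * ((t / r : ℝ) : ℂ)) • B)) ^ r) ≤
      t ^ 2 * l2OpNorm (A * B - B * A) / (2 * r) := by
  let φ := Matrix.toEuclideanCLM (𝕜 := ℂ) (n := Fin d)
  let ψlin : Matrix (Fin d) (Fin d) ℂ ≃ₗ[ℂ]
      (EuclideanSpace ℂ (Fin d) →L[ℂ] EuclideanSpace ℂ (Fin d)) :=
    { toFun := φ, invFun := φ.symm,
      map_add' := map_add φ, map_smul' := map_smul φ,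
      left_inv := φ.left_inv, right_inv := φ.right_inv }
  let ψ := ψlin.toContinuousLinearEquiv
  have hψφ : ∀ M, ψ M = φ M := fun _ => rfl
  have hexp : ∀ M : Matrix (Fin d) (Fin d) ℂ,
      φ (NormedSpace.exp M) = NormedSpace.exp (φ M) := by
    intro M
    have e1 := congrFun (NormedSpace.exp_eq_tsum (𝕂 := ℂ) (𝔸 := Matrix (Fin d) (Fin d) ℂ)) M
    have e2 := congrFun (NormedSpace.exp_eq_tsum (𝕂 := ℂ)
      (𝔸 := EuclideanSpace ℂ (Fin d) →L[ℂ] EuclideanSpace ℂ (Fin d))) (φ M)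
    rw [e1, e2, ← hψφ, ψ.map_tsum]
    congr 1
    funext n
    rw [hψφ, _root_.map_smul, map_pow]
  have h1 : ‖(1 : EuclideanSpace ℂ (Fin d) →L[ℂ] EuclideanSpace ℂ (Fin d))‖ ≤ 1 := by
    rw [ContinuousLinearMap.one_def]
    exact ContinuousLinearMap.norm_id_le
  have hA' : star (φ A) = φ A := by
    rw [← map_star, Matrix.star_eq_conjTranspose, hA]
  have hB' : star (φ B) = φ B := by
    rw [← map_star, Matrix.star_eq_conjTranspose, hB]
  have key := TrotterAux.abstract_trotter h1 (φ A) (φ B) hA' hB' t ht r hr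
  have hL : φ (NormedSpace.exp ((-Complex.I * (t : ℂ)) • (A + B)) -
        (NormedSpace.exp ((-Complex.I * ((t / r : ℝ) : ℂ)) • A) *
          NormedSpace.exp ((-Complex.I * ((t / r : ℝ) : ℂ)) • B)) ^ r) =
      NormedSpace.exp ((-Complex.I * (t : ℂ)) • (φ A + φ B)) -
        (NormedSpace.exp ((-Complex.I * ((t / r : ℝ) : ℂ)) • φ A) *
          NormedSpace.exp ((-Complex.I * ((t / r : ℝ) : ℂ)) • φ B)) ^ r := by
    rw [map_sub, map_pow, _root_.map_mul, hexp, hexp, hexp, _root_.map_smul, _root_.map_smul,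
      _root_.map_smul, map_add]
  have hC : φ (A * B - B * A) = φ A * φ B - φ B * φ A := by
    rw [map_sub, _root_.map_mul, _root_.map_mul]
  show ‖φ _‖ ≤ t ^ 2 * ‖φ (A * B - B * A)‖ / (2 * r)
  rw [hL, hC]
  exact key
end
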